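/- arXiv:1207.1645 — 6 statements merged into one kernel-verified Lean document; each statement's English description precedes it below -/
import Mathlib

section
/- Let P be a nonatomic countably additive nonnegative measure on a standard Borel space and f:[0,P(Ω)]→ℝ with f(0)=0. Then the game ν = f∘P has bounded variation (i.e. sup over chains ∅=A₀⊆A₁⊆⋯⊆Aₙ=Ω of Σ|ν(A_k)−ν(A_{k−1})| is finite) if and only if f has bounded variation on [0,P(Ω)]. -/
open MeasureTheory Set Filter Topology

def Nonatomic {Ω : Type*} [MeasurableSpace Ω] (P : Measure Ω) : Prop :=
  ∀ A : Set Ω, MeasurableSet A → 0 < P A →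
    ∃ B : Set Ω, MeasurableSet B ∧ B ⊆ A ∧ 0 < P B ∧ P B < P A

lemma chain_exists {Ω : Type*} [MeasurableSpace Ω] [StandardBorelSpace Ω]
    (P : Measure Ω) [IsFiniteMeasure P] (hP : Nonatomic P)
    (v : ℕ → ℝ) (hv : Monotone v) (h0 : v 0 = 0)
    (hmem : ∀ k, v k ∈ Set.Icc 0 (P Set.univ).toReal)
    (m : ℕ) (hm : 1 ≤ m) (hvm : v m = (P Set.univ).toReal) :
    ∃ A : ℕ → Set Ω, (∀ k, MeasurableSet (A k)) ∧ Monotone A ∧ A 0 = ∅ ∧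
      A m = Set.univ ∧ ∀ k, (P (A k)).toReal = v k := by
  set T : ℝ := (P Set.univ).toReal with hTdef
  obtain ⟨g, hg⟩ := MeasureTheory.exists_measurableEmbedding_real Ω
  set μ : Measure ℝ := P.map g with hμdef
  have hμIic : ∀ y : ℝ, μ (Iic y) = P (g ⁻¹' Iic y) := fun y =>
    Measure.map_apply hg.measurable measurableSet_Iic
  have hμuniv : μ Set.univ = P Set.univ := by
    rw [hμdef, Measure.map_apply hg.measurable MeasurableSet.univ, preimage_univ]
  haveI : IsFiniteMeasure μ := by
    constructor
    rw [hμuniv]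
    exact measure_lt_top P _
  haveI : NullSingletonClass μ := by
    constructor
    intro a
    rw [hμdef, Measure.map_apply hg.measurable (measurableSet_singleton a)]
    by_contra h
    have hpos : 0 < P (g ⁻¹' {a}) := pos_iff_ne_zero.mpr h
    obtain ⟨B, _, hBsub, hB0, hBlt⟩ :=
      hP _ (hg.measurable (measurableSet_singleton a)) hpos
    obtain ⟨b, hb⟩ := nonempty_of_measure_ne_zero hB0.ne'
    have hsub : g ⁻¹' {a} ⊆ B := by
      intro x hx
      have : g x = g b := by
        have h1 : g x = a := hx
        have h2 : g b = a := hBsub hb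
        rw [h1, h2]
      rwa [hg.injective this]
    exact absurd (le_antisymm hBlt.le (measure_mono hsub)) hBlt.ne
  set F : ℝ → ℝ := fun y => (μ (Iic y)).toReal with hFdef
  have Fmono : Monotone F := fun a b hab =>
    ENNReal.toReal_mono (measure_ne_top μ _) (measure_mono (Iic_subset_Iic.2 hab))
  have hsplit : ∀ a c : ℝ, a ≤ c → F c - F a = (μ (Ioc a c)).toReal := by
    intro a c hac
    have hdisj : Disjoint (Iic a) (Ioc a c) := by
      rw [Set.disjoint_left]
      intro y hy hy2
      exact absurd hy2.1 (not_lt.2 hy)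
    have h1 : μ (Iic c) = μ (Iic a) + μ (Ioc a c) := by
      rw [← Iic_union_Ioc_eq_Iic hac, measure_union hdisj measurableSet_Ioc]
    simp only [hFdef]
    rw [h1, ENNReal.toReal_add (measure_ne_top μ _) (measure_ne_top μ _)]
    ring
  have Fcont : Continuous F := by
    rw [continuous_iff_continuousAt]
    intro b
    have hG : Tendsto (fun δ => (μ (Icc (b - δ) (b + δ))).toReal) (𝓝 0) (𝓝 0) := by
      have h1 := tendsto_measure_Icc μ b
      have h2 := (ENNReal.tendsto_toReal (a := 0) (by simp)).comp h1
      simpa [Function.comp_def] using h2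
    have key : ∀ x, |F x - F b| ≤ (μ (Icc (b - |x - b|) (b + |x - b|))).toReal := by
      intro x
      rcases le_total b x with h | h
      · have habs : |x - b| = x - b := abs_of_nonneg (by linarith)
        rw [abs_of_nonneg (sub_nonneg.2 (Fmono h)), hsplit b x h]
        refine ENNReal.toReal_mono (measure_ne_top μ _) (measure_mono ?_)
        intro y hy
        constructor <;> rw [habs] <;> [linarith [hy.1]; linarith [hy.2]]
      · have habs : |x - b| = b - x := by rw [abs_of_nonpos (by linarith)]; ring
        rw [abs_of_nonpos (sub_nonpos.2 (Fmono h)), neg_sub, hsplit x b h]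
        refine ENNReal.toReal_mono (measure_ne_top μ _) (measure_mono ?_)
        intro y hy
        constructor <;> rw [habs] <;> [linarith [hy.1]; linarith [hy.2]]
    have habs : Tendsto (fun x : ℝ => |x - b|) (𝓝 b) (𝓝 0) := by
      have hc : Continuous (fun x : ℝ => |x - b|) :=
        (continuous_id.sub continuous_const).abs
      have := hc.tendsto b
      simpa using this
    have h2 : Tendsto (fun x => |F x - F b|) (𝓝 b) (𝓝 0) :=
      squeeze_zero (fun x => abs_nonneg _) key (hG.comp habs)
    rw [ContinuousAt, tendsto_iff_dist_tendsto_zero]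
    simpa [Real.dist_eq] using h2
  have Ftop : Tendsto F atTop (𝓝 T) := by
    have h1 := tendsto_measure_Iic_atTop μ
    have h2 := (ENNReal.tendsto_toReal (measure_ne_top μ Set.univ)).comp h1
    have h3 : (μ Set.univ).toReal = T := by rw [hμuniv]
    simpa [Function.comp_def, h3, hFdef] using h2
  have Fbot : Tendsto F atBot (𝓝 0) := by
    have hone : (⋂ x : ℝ, Iic x) = (∅ : Set ℝ) := by
      ext y
      simp only [mem_iInter, mem_Iic, mem_empty_iff_false, iff_false, not_forall, not_le]
      exact ⟨y - 1, by linarith⟩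
    have h1 := tendsto_measure_iInter_atBot (μ := μ) (s := fun x : ℝ => Iic x)
      (fun x => measurableSet_Iic.nullMeasurableSet) (fun a b hab => Iic_subset_Iic.2 hab)
      ⟨0, measure_ne_top μ _⟩
    rw [hone] at h1
    simp only [measure_empty] at h1
    have h2 := (ENNReal.tendsto_toReal (a := 0) (by simp)).comp h1
    simpa [Function.comp_def, hFdef] using h2
  -- the "inverse" of F via sInf
  set S : ℝ → Set ℝ := fun t => {y | t ≤ F y} with hSdef
  have hSne : ∀ t, t < T → (S t).Nonempty := by
    intro t ht
    obtain ⟨y, hy⟩ := (Ftop.eventually (eventually_gt_nhds ht)).exists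
    exact ⟨y, hy.le⟩
  have hSbdd : ∀ t, 0 < t → BddBelow (S t) := by
    intro t ht
    obtain ⟨y₀, hy₀⟩ := eventually_atBot.mp (Fbot.eventually (eventually_lt_nhds ht))
    refine ⟨y₀, fun y hy => ?_⟩
    by_contra hlt
    push_neg at hlt
    exact absurd (lt_of_le_of_lt hy (hy₀ y hlt.le)) (lt_irrefl t)
  have hSclosed : ∀ t, IsClosed (S t) := by
    intro t
    have : S t = F ⁻¹' (Ici t) := rfl
    rw [this]
    exact IsClosed.preimage Fcont isClosed_Ici
  set x : ℝ → ℝ := fun t => sInf (S t) with hxdef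
  have hFx : ∀ t, 0 < t → t < T → F (x t) = t := by
    intro t ht0 htT
    have hmem' : x t ∈ S t := (hSclosed t).csInf_mem (hSne t htT) (hSbdd t ht0)
    refine le_antisymm ?_ hmem'
    by_contra hgt
    push_neg at hgt
    have hopen : F ⁻¹' (Ioi t) ∈ 𝓝 (x t) :=
      (isOpen_Ioi.preimage Fcont).mem_nhds hgt
    obtain ⟨ε, hε, hball⟩ := Metric.mem_nhds_iff.mp hopen
    have hmem2 : x t - ε / 2 ∈ S t := by
      have hball2 : x t - ε / 2 ∈ Metric.ball (x t) ε := by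
        rw [Metric.mem_ball, Real.dist_eq, abs_of_nonpos (by linarith)]
        linarith
      have h3 : t < F (x t - ε / 2) := hball hball2
      show t ≤ F (x t - ε / 2)
      exact h3.le
    have := csInf_le (hSbdd t ht0) hmem2
    simp only [hxdef] at this
    linarith
  have hxmono : ∀ s t, 0 < s → t < T → s ≤ t → x s ≤ x t :=
    fun s t hs htT hst => csInf_le_csInf (hSbdd s hs) (hSne t htT)
      (fun y hy => le_trans hst hy)
  classical
  set D : ℕ → Set Ω := fun k =>
    if T ≤ v k then Set.univ else if v k ≤ 0 then ∅ else g ⁻¹' (Iic (x (v k))) with hDdef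
  set A : ℕ → Set Ω := fun k =>
    if k = 0 then ∅ else if m ≤ k then Set.univ else D k with hAdef
  have hDmono : ∀ k, D k ⊆ D (k + 1) := by
    intro k
    have hvk := hv (Nat.le_succ k)
    by_cases h1 : T ≤ v k
    · have h3 : T ≤ v (k + 1) := le_trans h1 hvk
      simp only [hDdef, if_pos h1, if_pos h3]
      exact subset_rfl
    · by_cases h2 : v k ≤ 0
      · simp only [hDdef, if_neg h1, if_pos h2]
        exact empty_subset _
      · by_cases h3 : T ≤ v (k + 1)
        · simp only [hDdef, if_neg h1, if_pos h3]
          exact subset_univ _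
        · have h4 : ¬ v (k + 1) ≤ 0 := fun hc => h2 (le_trans hvk hc)
          simp only [hDdef, if_neg h1, if_neg h2, if_neg h3, if_neg h4]
          exact preimage_mono (Iic_subset_Iic.2
            (hxmono _ _ (not_le.mp h2) (not_le.mp h3) hvk))
  have hAmono : Monotone A := by
    apply monotone_nat_of_le_succ
    intro k
    rcases Nat.eq_zero_or_pos k with rfl | hk
    · show A 0 ⊆ A 1
      simp only [hAdef, if_pos rfl]
      exact empty_subset _
    · have hk0 : k ≠ 0 := hk.ne'
      have hk1 : k + 1 ≠ 0 := Nat.succ_ne_zero k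
      show A k ⊆ A (k + 1)
      by_cases hmk : m ≤ k
      · have hmk1 : m ≤ k + 1 := le_trans hmk (Nat.le_succ k)
        simp only [hAdef, if_neg hk0, if_neg hk1, if_pos hmk, if_pos hmk1]
        exact subset_rfl
      · by_cases hmk1 : m ≤ k + 1
        · simp only [hAdef, if_neg hk0, if_neg hk1, if_neg hmk, if_pos hmk1]
          exact subset_univ _
        · simp only [hAdef, if_neg hk0, if_neg hk1, if_neg hmk, if_neg hmk1]
          exact hDmono k
  have hDval : ∀ k, (P (D k)).toReal = v k := by
    intro k
    by_cases h1 : T ≤ v k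
    · have hvkT : v k = T := le_antisymm (hmem k).2 h1
      simp only [hDdef, if_pos h1]
      rw [hvkT]
    · by_cases h2 : v k ≤ 0
      · have hvk0 : v k = 0 := le_antisymm h2 (hmem k).1
        simp only [hDdef, if_neg h1, if_pos h2, measure_empty, ENNReal.toReal_zero]
        exact hvk0.symm
      · simp only [hDdef, if_neg h1, if_neg h2]
        rw [← hμIic]
        exact hFx (v k) (not_le.mp h2) (not_le.mp h1)
  have hAval : ∀ k, (P (A k)).toReal = v k := by
    intro k
    rcases Nat.eq_zero_or_pos k with rfl | hk
    · simp only [hAdef, if_pos rfl, measure_empty, ENNReal.toReal_zero]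
      exact h0.symm
    · have hk0 : k ≠ 0 := hk.ne'
      by_cases hmk : m ≤ k
      · have hvkT : v k = T := le_antisymm (hmem k).2 (hvm ▸ hv hmk)
        simp only [hAdef, if_neg hk0, if_pos hmk]
        rw [hvkT]
      · simp only [hAdef, if_neg hk0, if_neg hmk]
        exact hDval k
  have hAmeas : ∀ k, MeasurableSet (A k) := by
    intro k
    simp only [hAdef, hDdef]
    split_ifs
    all_goals first
      | exact MeasurableSet.empty
      | exact MeasurableSet.univ
      | exact hg.measurable measurableSet_Iic
  refine ⟨A, hAmeas, hAmono, ?_, ?_, hAval⟩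
  · simp [hAdef]
  · have hm0 : m ≠ 0 := by omega
    simp [hAdef, hm0]

/-- The game `ν = f ∘ P` has bounded variation (supremum over chains
`∅ = A₀ ⊆ A₁ ⊆ ⋯ ⊆ Aₙ = Ω` of `Σ |ν(A_k) - ν(A_{k-1})|` is finite) iff
`f` has bounded variation on `[0, P Ω]`. -/
theorem stmt3 {Ω : Type*} [MeasurableSpace Ω] [StandardBorelSpace Ω]
    (P : Measure Ω) [IsFiniteMeasure P] (hP : Nonatomic P)
    (f : ℝ → ℝ) (hf0 : f 0 = 0) :
    (∃ M : ℝ, ∀ (n : ℕ) (A : ℕ → Set Ω), (∀ k, MeasurableSet (A k)) →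
        Monotone A → A 0 = ∅ → A n = Set.univ →
        ∑ k ∈ Finset.range n,
          |f ((P (A (k + 1))).toReal) - f ((P (A k)).toReal)| ≤ M) ↔
      BoundedVariationOn f (Set.Icc 0 (P Set.univ).toReal) := by
  set T : ℝ := (P Set.univ).toReal with hTdef
  constructor
  · rintro ⟨M, hM⟩
    rw [BoundedVariationOn]
    have hbound : eVariationOn f (Set.Icc 0 T) ≤ ENNReal.ofReal M := by
      rw [eVariationOn]
      refine iSup_le ?_
      rintro ⟨n, ⟨u, hu, us⟩⟩
      classical
      set v : ℕ → ℝ := fun k =>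
        if k = 0 then 0 else if n + 2 ≤ k then T else u (k - 1) with hvdef
      have hT0 : (0 : ℝ) ≤ T := ENNReal.toReal_nonneg
      have hvmem : ∀ k, v k ∈ Set.Icc 0 T := by
        intro k
        rcases Nat.eq_zero_or_pos k with rfl | hk
        · simp only [hvdef, if_pos rfl]
          exact ⟨le_rfl, hT0⟩
        · have hk0 : k ≠ 0 := hk.ne'
          by_cases h2 : n + 2 ≤ k
          · simp only [hvdef, if_neg hk0, if_pos h2]
            exact ⟨hT0, le_rfl⟩
          · simp only [hvdef, if_neg hk0, if_neg h2]
            exact us (k - 1)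
      have hvmono : Monotone v := by
        apply monotone_nat_of_le_succ
        intro k
        rcases Nat.eq_zero_or_pos k with rfl | hk
        · have h1 := (hvmem 1).1
          calc v 0 = 0 := by simp [hvdef]
            _ ≤ v 1 := h1
        · have hk0 : k ≠ 0 := hk.ne'
          have hk1 : k + 1 ≠ 0 := Nat.succ_ne_zero k
          by_cases h2 : n + 2 ≤ k
          · have h2' : n + 2 ≤ k + 1 := le_trans h2 (Nat.le_succ k)
            simp only [hvdef, if_neg hk0, if_neg hk1, if_pos h2, if_pos h2']
            exact le_rfl
          · by_cases h2' : n + 2 ≤ k + 1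
            · simp only [hvdef, if_neg hk0, if_neg hk1, if_neg h2, if_pos h2']
              exact (us (k - 1)).2
            · simp only [hvdef, if_neg hk0, if_neg hk1, if_neg h2, if_neg h2']
              have : k + 1 - 1 = k := rfl
              rw [this]
              exact hu (Nat.sub_le k 1)
      have hv0 : v 0 = 0 := by simp [hvdef]
      have hvm : v (n + 2) = T := by simp [hvdef]
      obtain ⟨A, hAmeas, hAmono, hA0, hAm, hAval⟩ :=
        chain_exists P hP v hvmono hv0 hvmem (n + 2) (by omega) hvm
      have hsum := hM (n + 2) A hAmeas hAmono hA0 hAm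
      simp only [hAval] at hsum
      have hvu : ∀ i, i ≤ n → v (i + 1) = u i := by
        intro i hi
        have h1 : i + 1 ≠ 0 := Nat.succ_ne_zero i
        have h2 : ¬ (n + 2 ≤ i + 1) := by omega
        simp only [hvdef, if_neg h1, if_neg h2]
        congr 1
      have key : ∑ i ∈ Finset.range n, |f (u (i + 1)) - f (u i)| ≤ M := by
        set gg : ℕ → ℝ := fun k => |f (v (k + 1)) - f (v k)| with hgg
        have heq : ∀ i < n, |f (u (i + 1)) - f (u i)| = gg (i + 1) := by
          intro i hi
          simp only [hgg]
          rw [hvu (i + 1) (by omega), hvu i (by omega)]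
        have e1 : ∑ i ∈ Finset.range n, |f (u (i + 1)) - f (u i)|
            = ∑ i ∈ Finset.range n, gg (i + 1) :=
          Finset.sum_congr rfl fun i hi => heq i (Finset.mem_range.mp hi)
        have t1 := Finset.sum_range_succ' gg (n + 1)
        have t2 := Finset.sum_range_succ (fun i => gg (i + 1)) n
        have h0' : 0 ≤ gg 0 := abs_nonneg _
        have hn1 : 0 ≤ gg (n + 1) := abs_nonneg _
        have hle : ∑ i ∈ Finset.range n, gg (i + 1)
            ≤ ∑ k ∈ Finset.range (n + 2), gg k := by
          rw [t1, t2]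
          linarith
        calc ∑ i ∈ Finset.range n, |f (u (i + 1)) - f (u i)|
            = ∑ i ∈ Finset.range n, gg (i + 1) := e1
          _ ≤ ∑ k ∈ Finset.range (n + 2), gg k := hle
          _ ≤ M := hsum
      calc ∑ i ∈ Finset.range n, edist (f (u (i + 1))) (f (u i))
          = ENNReal.ofReal (∑ i ∈ Finset.range n, |f (u (i + 1)) - f (u i)|) := by
            rw [ENNReal.ofReal_sum_of_nonneg (fun i _ => abs_nonneg _)]
            exact Finset.sum_congr rfl fun i _ => by rw [edist_dist, Real.dist_eq]
        _ ≤ ENNReal.ofReal M := ENNReal.ofReal_le_ofReal key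
    exact ne_top_of_le_ne_top ENNReal.ofReal_ne_top hbound
  · intro hBV
    refine ⟨(eVariationOn f (Set.Icc 0 T)).toReal, ?_⟩
    intro n A hAmeas hAmono hA0 hAn
    have hu : Monotone (fun k => (P (A k)).toReal) := fun i j hij =>
      ENNReal.toReal_mono (measure_ne_top P _) (measure_mono (hAmono hij))
    have hus : ∀ i, (P (A i)).toReal ∈ Set.Icc 0 T := fun i =>
      ⟨ENNReal.toReal_nonneg,
        ENNReal.toReal_mono (measure_ne_top P _) (measure_mono (subset_univ _))⟩
    have hsum := eVariationOn.sum_le (f := f) (n := n) hu hus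
    have heq : ∑ i ∈ Finset.range n, edist (f ((P (A (i + 1))).toReal)) (f ((P (A i)).toReal))
        = ENNReal.ofReal
          (∑ i ∈ Finset.range n, |f ((P (A (i + 1))).toReal) - f ((P (A i)).toReal)|) := by
      rw [ENNReal.ofReal_sum_of_nonneg (fun i _ => abs_nonneg _)]
      exact Finset.sum_congr rfl fun i _ => by rw [edist_dist, Real.dist_eq]
    rw [heq] at hsum
    have hfin := ENNReal.toReal_mono hBV hsum
    rwa [ENNReal.toReal_ofReal (Finset.sum_nonneg fun i _ => abs_nonneg _)] at hfin
end

section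
/- On Ω=[0,1] with Lebesgue measure λ, let f(x)=x·sin(1/x) for x≠0 and f(0)=0. Then the game ν=f∘λ is continuous with respect to the Fréchet pseudometric d_λ, but ν does not have bounded variation (the supremum over chains of the sum of absolute increments is infinite). -/
open MeasureTheory Set

/-- `f(x) = x sin(1/x)` for `x ≠ 0`, `f(0) = 0`. -/
noncomputable def fOsc (x : ℝ) : ℝ := if x = 0 then 0 else x * Real.sin (1 / x)

lemma abs_fOsc_le (x : ℝ) : |fOsc x| ≤ |x| := by
  unfold fOsc
  split
  · simp
  · rw [abs_mul]
    calc |x| * |Real.sin (1/x)| ≤ |x| * 1 := by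
          gcongr; exact Real.abs_sin_le_one _
      _ = |x| := mul_one _

lemma continuous_fOsc : Continuous fOsc := by
  rw [continuous_iff_continuousAt]
  intro x
  by_cases hx : x = 0
  · subst hx
    have h0 : fOsc 0 = 0 := by simp [fOsc]
    rw [ContinuousAt, h0]
    have : Filter.Tendsto (fun y : ℝ => |y|) (nhds 0) (nhds 0) := by
      simpa using continuous_abs.tendsto (0 : ℝ)
    exact squeeze_zero_norm (fun y => by simpa using abs_fOsc_le y) this
  · have hcont : ContinuousAt (fun y : ℝ => y * Real.sin (1 / y)) x :=
      continuousAt_id.mul (Real.continuous_sin.continuousAt.comp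
        (continuousAt_const.div continuousAt_id hx))
    refine hcont.congr ?_
    filter_upwards [isOpen_compl_singleton.mem_nhds (by simpa using hx)] with y hy
    simp only [mem_compl_iff, mem_singleton_iff] at hy
    simp [fOsc, hy]

lemma sin_odd_half (m : ℕ) : Real.sin ((2 * m + 1) * Real.pi / 2) = (-1 : ℝ) ^ m := by
  have h : (2 * (m : ℝ) + 1) * Real.pi / 2 = m * Real.pi + Real.pi / 2 := by ring
  rw [h, Real.sin_add_pi_div_two]
  have := Real.cos_nat_mul_pi_sub 0 m
  simpa using this

lemma restrict_Icc_apply (c : ℝ) (h0 : 0 ≤ c) (h1 : c ≤ 1) :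
    (((volume : Measure ℝ).restrict (Icc (0 : ℝ) 1)) (Icc 0 c)).toReal = c := by
  rw [Measure.restrict_apply measurableSet_Icc, Icc_inter_Icc]
  rw [Real.volume_Icc]
  simp [min_eq_left h1, h0]

lemma meas_ne_top (X : Set ℝ) :
    ((volume : Measure ℝ).restrict (Icc (0 : ℝ) 1)) X ≠ ⊤ := by
  refine ne_top_of_le_ne_top ?_ (measure_mono (subset_univ X))
  rw [Measure.restrict_apply_univ, Real.volume_Icc]
  simp

lemma meas_le_one (X : Set ℝ) :
    (((volume : Measure ℝ).restrict (Icc (0 : ℝ) 1)) X).toReal ≤ 1 := by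
  have h : ((volume : Measure ℝ).restrict (Icc (0 : ℝ) 1)) X ≤ 1 := by
    refine (measure_mono (subset_univ X)).trans ?_
    rw [Measure.restrict_apply_univ, Real.volume_Icc]
    simp
  calc (((volume : Measure ℝ).restrict (Icc (0 : ℝ) 1)) X).toReal
      ≤ (1 : ENNReal).toReal := ENNReal.toReal_mono (by simp) h
    _ = 1 := by simp

lemma abs_meas_sub (A B : Set ℝ) :
    |(((volume : Measure ℝ).restrict (Icc (0 : ℝ) 1)) A).toReal -
      (((volume : Measure ℝ).restrict (Icc (0 : ℝ) 1)) B).toReal| ≤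
    (((volume : Measure ℝ).restrict (Icc (0 : ℝ) 1)) (symmDiff A B)).toReal := by
  set μ := (volume : Measure ℝ).restrict (Icc (0 : ℝ) 1)
  have hsub : ∀ X Y : Set ℝ, X ⊆ Y ∪ symmDiff X Y := by
    intro X Y x hx
    by_cases hxY : x ∈ Y
    · exact Or.inl hxY
    · exact Or.inr (Set.mem_symmDiff.mpr (Or.inl ⟨hx, hxY⟩))
  have key : ∀ X Y : Set ℝ, (μ X).toReal ≤ (μ Y).toReal + (μ (symmDiff X Y)).toReal := by
    intro X Y
    have h1 : μ X ≤ μ Y + μ (symmDiff X Y) :=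
      (measure_mono (hsub X Y)).trans (measure_union_le _ _)
    have h2 := ENNReal.toReal_mono (by
      exact ENNReal.add_ne_top.mpr ⟨meas_ne_top Y, meas_ne_top _⟩) h1
    rwa [ENNReal.toReal_add (meas_ne_top Y) (meas_ne_top _)] at h2
  rw [abs_sub_le_iff]
  constructor
  · linarith [key A B]
  · have := key B A
    rw [symmDiff_comm] at this
    linarith


noncomputable def tOsc (N k : ℕ) : ℝ := 2 / ((2 * ((N - k : ℕ) : ℝ) + 1) * Real.pi)

noncomputable def AOsc (N : ℕ) : ℕ → Set ℝ := fun k =>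
  if k = 0 then ∅ else if k ≤ N then Icc 0 (tOsc N k) else univ

lemma tOsc_pos (N k : ℕ) : 0 < tOsc N k := by
  unfold tOsc
  positivity

lemma tOsc_le_one (N k : ℕ) : tOsc N k ≤ 1 := by
  unfold tOsc
  rw [div_le_one (by positivity)]
  have hπ := Real.pi_gt_three
  have hm : (0:ℝ) ≤ ((N - k : ℕ) : ℝ) := Nat.cast_nonneg _
  nlinarith

lemma tOsc_mono (N : ℕ) {k l : ℕ} (h : k ≤ l) : tOsc N k ≤ tOsc N l := by
  unfold tOsc
  have hπ := Real.pi_pos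
  have hcast : ((N - l : ℕ) : ℝ) ≤ ((N - k : ℕ) : ℝ) := by
    exact_mod_cast Nat.sub_le_sub_left h N
  gcongr

lemma fOsc_tOsc (N k : ℕ) : fOsc (tOsc N k) = tOsc N k * (-1 : ℝ) ^ (N - k) := by
  rw [fOsc, if_neg (tOsc_pos N k).ne']
  congr 1
  have hπ := Real.pi_pos
  have h1 : 1 / tOsc N k = (2 * ((N - k : ℕ) : ℝ) + 1) * Real.pi / 2 := by
    unfold tOsc
    rw [one_div_div]
  rw [h1, sin_odd_half]

lemma measurable_AOsc (N k : ℕ) : MeasurableSet (AOsc N k) := by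
  unfold AOsc
  split
  · exact MeasurableSet.empty
  split
  · exact measurableSet_Icc
  · exact MeasurableSet.univ

lemma monotone_AOsc (N : ℕ) : Monotone (AOsc N) := by
  apply monotone_nat_of_le_succ
  intro k
  unfold AOsc
  by_cases hk0 : k = 0
  · simp [hk0]
  rw [if_neg hk0, if_neg (Nat.succ_ne_zero k)]
  by_cases hk1 : k + 1 ≤ N
  · rw [if_pos (by omega), if_pos hk1]
    exact Icc_subset_Icc le_rfl (tOsc_mono N (Nat.le_succ k))
  · rw [if_neg hk1]
    split
    · exact subset_univ _
    · exact subset_univ _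

lemma meas_AOsc (N k : ℕ) (h1 : 1 ≤ k) (h2 : k ≤ N) :
    (((volume : Measure ℝ).restrict (Icc (0 : ℝ) 1)) (AOsc N k)).toReal = tOsc N k := by
  rw [AOsc]
  rw [if_neg (by omega : ¬ k = 0), if_pos h2]
  exact restrict_Icc_apply _ (tOsc_pos N k).le (tOsc_le_one N k)

lemma meas_AOsc_zero (N : ℕ) :
    (((volume : Measure ℝ).restrict (Icc (0 : ℝ) 1)) (AOsc N 0)).toReal = 0 := by
  simp [AOsc]

lemma fOsc_zero : fOsc 0 = 0 := by simp [fOsc]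

lemma term_ge (N k : ℕ) (hk : k + 1 ≤ N) :
    tOsc N (k + 1) ≤
      |fOsc (((volume : Measure ℝ).restrict (Icc (0 : ℝ) 1)) (AOsc N (k + 1))).toReal -
        fOsc (((volume : Measure ℝ).restrict (Icc (0 : ℝ) 1)) (AOsc N k)).toReal| := by
  rw [meas_AOsc N (k+1) (by omega) hk, fOsc_tOsc]
  by_cases hk0 : k = 0
  · subst hk0
    rw [meas_AOsc_zero, fOsc_zero, sub_zero, abs_mul, abs_pow, abs_neg, abs_one, one_pow,
      mul_one, abs_of_pos (tOsc_pos N 1)]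
  · rw [meas_AOsc N k (by omega) (by omega), fOsc_tOsc]
    have hexp : N - k = (N - (k + 1)) + 1 := by omega
    rw [hexp, pow_succ]
    have h : tOsc N (k + 1) * (-1 : ℝ) ^ (N - (k + 1)) -
        tOsc N k * ((-1 : ℝ) ^ (N - (k + 1)) * -1) =
        (tOsc N (k + 1) + tOsc N k) * (-1 : ℝ) ^ (N - (k + 1)) := by ring
    rw [h, abs_mul, abs_pow, abs_neg, abs_one, one_pow, mul_one,
      abs_of_pos (by linarith [tOsc_pos N (k+1), tOsc_pos N k])]
    linarith [tOsc_pos N k]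

/-- The game `ν = fOsc ∘ λ` (Lebesgue measure on `[0,1]`) is continuous w.r.t. the
Fréchet pseudometric `d_λ`, but its variation over chains is unbounded. -/
theorem stmt6 :
    (∀ ε > 0, ∃ δ > 0, ∀ A B : Set ℝ, MeasurableSet A → MeasurableSet B →
        ((volume.restrict (Set.Icc (0 : ℝ) 1)) (symmDiff A B)).toReal < δ →
        |fOsc (((volume.restrict (Set.Icc (0 : ℝ) 1)) A).toReal) -
          fOsc (((volume.restrict (Set.Icc (0 : ℝ) 1)) B).toReal)| < ε) ∧
    (∀ M : ℝ, ∃ (n : ℕ) (A : ℕ → Set ℝ), (∀ k, MeasurableSet (A k)) ∧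
        Monotone A ∧ A 0 = ∅ ∧ A n = Set.univ ∧
        M < ∑ k ∈ Finset.range n,
          |fOsc (((volume.restrict (Set.Icc (0 : ℝ) 1)) (A (k + 1))).toReal) -
            fOsc (((volume.restrict (Set.Icc (0 : ℝ) 1)) (A k)).toReal)|) := by
  constructor
  · -- continuity
    intro ε hε
    have huc : UniformContinuousOn fOsc (Icc (0:ℝ) 1) :=
      isCompact_Icc.uniformContinuousOn_of_continuous continuous_fOsc.continuousOn
    rw [Metric.uniformContinuousOn_iff] at huc
    obtain ⟨δ, hδ, hδ'⟩ := huc ε hε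
    refine ⟨δ, hδ, fun A B _ _ hAB => ?_⟩
    set μ := (volume : Measure ℝ).restrict (Icc (0 : ℝ) 1)
    have ha : (μ A).toReal ∈ Icc (0:ℝ) 1 := ⟨ENNReal.toReal_nonneg, meas_le_one A⟩
    have hb : (μ B).toReal ∈ Icc (0:ℝ) 1 := ⟨ENNReal.toReal_nonneg, meas_le_one B⟩
    have hd : dist ((μ A).toReal) ((μ B).toReal) < δ := by
      rw [Real.dist_eq]
      exact lt_of_le_of_lt (abs_meas_sub A B) hAB
    have := hδ' _ ha _ hb hd
    rwa [Real.dist_eq] at this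
  · -- unbounded variation
    intro M
    obtain ⟨N, hN⟩ : ∃ N, Real.pi * M < ∑ i ∈ Finset.range N, (1 / (i + 1) : ℝ) :=
      (Real.tendsto_sum_range_one_div_nat_succ_atTop.eventually_gt_atTop (Real.pi * M)).exists
    have hπ := Real.pi_pos
    refine ⟨N + 1, AOsc N, fun k => measurable_AOsc N k, monotone_AOsc N, by simp [AOsc], ?_, ?_⟩
    · rw [AOsc]
      simp
    · have step1 : ∑ k ∈ Finset.range (N + 1),
          (if k + 1 ≤ N then tOsc N (k + 1) else 0) ≤
          ∑ k ∈ Finset.range (N + 1),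
            |fOsc (((volume.restrict (Set.Icc (0 : ℝ) 1)) (AOsc N (k + 1))).toReal) -
              fOsc (((volume.restrict (Set.Icc (0 : ℝ) 1)) (AOsc N k)).toReal)| := by
        apply Finset.sum_le_sum
        intro k _
        split
        · exact term_ge N k (by omega)
        · exact abs_nonneg _
      have step2 : ∑ k ∈ Finset.range (N + 1),
          (if k + 1 ≤ N then tOsc N (k + 1) else 0) =
          ∑ k ∈ Finset.range N, (2 / ((2 * ((N - 1 - k : ℕ) : ℝ) + 1) * Real.pi)) := by
        rw [Finset.sum_range_succ, if_neg (by omega), add_zero]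
        apply Finset.sum_congr rfl
        intro k hk
        rw [Finset.mem_range] at hk
        rw [if_pos (by omega)]
        have hnk : N - (k + 1) = N - 1 - k := by omega
        unfold tOsc
        rw [hnk]
      have step3 : ∑ k ∈ Finset.range N, (2 / ((2 * ((N - 1 - k : ℕ) : ℝ) + 1) * Real.pi)) =
          ∑ j ∈ Finset.range N, (2 / ((2 * (j : ℝ) + 1) * Real.pi)) :=
        Finset.sum_range_reflect (fun j => 2 / ((2 * (j : ℝ) + 1) * Real.pi)) N
      have step4 : ∑ j ∈ Finset.range N, (1 / Real.pi) * (1 / (j + 1) : ℝ) ≤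
          ∑ j ∈ Finset.range N, (2 / ((2 * (j : ℝ) + 1) * Real.pi)) := by
        apply Finset.sum_le_sum
        intro j _
        have hj : (0:ℝ) ≤ (j:ℝ) := Nat.cast_nonneg _
        have h1 : (1:ℝ) / Real.pi * (1 / ((j:ℝ) + 1)) = 1 / (((j:ℝ) + 1) * Real.pi) := by
          rw [div_mul_div_comm, one_mul, mul_comm]
        rw [h1, div_le_div_iff₀ (by positivity) (by positivity)]
        nlinarith
      have step5 : M < ∑ j ∈ Finset.range N, (1 / Real.pi) * (1 / (j + 1) : ℝ) := by
        rw [← Finset.mul_sum]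
        have hmul := mul_lt_mul_of_pos_left hN (show (0:ℝ) < 1 / Real.pi by positivity)
        calc M = 1 / Real.pi * (Real.pi * M) := by field_simp
          _ < _ := hmul
      calc M < _ := step5
        _ ≤ _ := step4
        _ = _ := step3.symm
        _ = _ := step2.symm
        _ ≤ _ := step1
end

section
/- Let P be a nonatomic countably additive nonnegative measure on a standard Borel space, f:[0,P(Ω)]→ℝ with f(0)=0 and f differentiable at 0 (right derivative f′(0)). Then the game ν=f∘P is Burkill–Cesari integrable with respect to the mesh δ_P, and ∂⁺_∅(ν,F)=f′(0)·P(F) for every F∈Σ. -/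
open MeasureTheory Set

def IsPartition {Ω : Type*} [MeasurableSpace Ω] (D : Finset (Set Ω)) (E : Set Ω) : Prop :=
  (∀ I ∈ D, MeasurableSet I) ∧ ((D : Set (Set Ω)).PairwiseDisjoint id) ∧
    ⋃₀ (D : Set (Set Ω)) = E

/-- If `f(0) = 0` and `f` has (right) derivative `L` at `0`, then `ν = f ∘ P` is
Burkill–Cesari integrable w.r.t. the mesh `δ_P`, with `∂⁺_∅(ν, F) = L · P(F)`. -/
theorem stmt10 {Ω : Type*} [MeasurableSpace Ω] [StandardBorelSpace Ω]
    (P : Measure Ω) [IsFiniteMeasure P] (hP : Nonatomic P)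
    (f : ℝ → ℝ) (hf0 : f 0 = 0) (L : ℝ)
    (hderiv : Filter.Tendsto (fun x => f x / x) (nhdsWithin 0 (Set.Ioi 0)) (nhds L)) :
    ∀ F : Set Ω, MeasurableSet F → ∀ ε > 0, ∃ δ > 0,
      ∀ D : Finset (Set Ω), IsPartition D F → (∀ I ∈ D, (P I).toReal < δ) →
        |(∑ I ∈ D, f ((P I).toReal)) - L * (P F).toReal| < ε := by
  intro F hF ε hε
  set C : ℝ := (P F).toReal with hC
  have hC0 : 0 ≤ C := ENNReal.toReal_nonneg
  set ε' : ℝ := ε / (C + 1) with hε'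
  have hε'0 : 0 < ε' := div_pos hε (by linarith)
  -- get δ from the derivative hypothesis
  have := Metric.tendsto_nhdsWithin_nhds.mp hderiv ε' hε'0
  obtain ⟨δ, hδ0, hδ⟩ := this
  refine ⟨δ, hδ0, ?_⟩
  intro D hD hmesh
  obtain ⟨hmeas, hdisj, hunion⟩ := hD
  -- sum of measures equals measure of F
  have hsum : ∑ I ∈ D, (P I).toReal = C := by
    have h1 : P (⋃ I ∈ D, I) = ∑ I ∈ D, P I :=
      measure_biUnion_finset hdisj hmeas
    have h2 : (⋃ I ∈ D, I) = F := by
      rw [← hunion]; exact (sUnion_eq_biUnion).symm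
    rw [h2] at h1
    rw [hC, h1, ENNReal.toReal_sum (fun I _ => measure_ne_top P I)]
  -- pointwise estimate
  have hpt : ∀ I ∈ D, |f ((P I).toReal) - L * (P I).toReal| ≤ ε' * (P I).toReal := by
    intro I hI
    set x : ℝ := (P I).toReal with hx
    have hx0 : 0 ≤ x := ENNReal.toReal_nonneg
    rcases eq_or_lt_of_le hx0 with h0 | h0
    · simp [← h0, hf0]
    · have hmem : x ∈ Set.Ioi (0 : ℝ) := h0
      have hdist : dist x 0 < δ := by
        rw [Real.dist_eq, sub_zero, abs_of_pos h0]; exact hmesh I hI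
      have := hδ hmem hdist
      rw [Real.dist_eq] at this
      have h2 : |f x / x - L| * x ≤ ε' * x :=
        mul_le_mul_of_nonneg_right this.le hx0
      have heq : f x - L * x = (f x / x - L) * x := by field_simp
      calc |f x - L * x| = |f x / x - L| * x := by rw [heq, abs_mul, abs_of_pos h0]
        _ ≤ ε' * x := h2
  calc |(∑ I ∈ D, f ((P I).toReal)) - L * C|
      = |∑ I ∈ D, (f ((P I).toReal) - L * (P I).toReal)| := by
        rw [Finset.sum_sub_distrib, ← Finset.mul_sum, hsum]
    _ ≤ ∑ I ∈ D, |f ((P I).toReal) - L * (P I).toReal| := Finset.abs_sum_le_sum_abs _ _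
    _ ≤ ∑ I ∈ D, ε' * (P I).toReal := Finset.sum_le_sum hpt
    _ = ε' * C := by rw [← Finset.mul_sum, hsum]
    _ < ε := by
        rw [hε', div_mul_eq_mul_div, div_lt_iff₀ (by linarith)]
        nlinarith
end

section
/- Let λ be a nonatomic nonnegative countably additive probability measure on a standard Borel space and f:[0,1]→ℝ with f(0)=0. Then the game ν=f∘λ is a Lipschitz game (there exists μ∈NA⁺ with both μ−ν and μ+ν monotone) if and only if f is Lipschitz on [0,1]; moreover in that case one may take μ=Lλ where L is a Lipschitz constant of f. -/
open MeasureTheory Set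
open scoped ENNReal NNReal
open ProbabilityTheory Filter Topology

lemma aux_cdf_cont (ρ : Measure ℝ) [IsProbabilityMeasure ρ] (h : ∀ x : ℝ, ρ {x} = 0) :
    Continuous (cdf ρ) := by
  rw [continuous_iff_continuousAt]
  intro x
  rw [(cdf ρ).mono.continuousAt_iff_leftLim_eq_rightLim, StieltjesFunction.rightLim_eq]
  have h1 : (cdf ρ).measure {x} = 0 := by rw [measure_cdf]; exact h x
  rw [StieltjesFunction.measure_singleton] at h1
  have h2 := Monotone.leftLim_le (cdf ρ).mono (le_refl x)
  have h3 : cdf ρ x - Function.leftLim (cdf ρ) x ≤ 0 := by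
    by_contra hc
    push_neg at hc
    exact absurd h1 (by simp [ENNReal.ofReal_eq_zero]; linarith)
  linarith

lemma aux_chain {Ω : Type*} [MeasurableSpace Ω] [StandardBorelSpace Ω]
    (P : Measure Ω) [IsProbabilityMeasure P] (hP : ∀ x : Ω, P {x} = 0) :
    ∃ B : ℝ → Set Ω, (∀ s, MeasurableSet (B s)) ∧ (∀ s t, s ≤ t → B s ⊆ B t) ∧
      (∀ s ∈ Icc (0:ℝ) 1, P (B s) = ENNReal.ofReal s) := by
  obtain ⟨g, hg⟩ := exists_measurableEmbedding_real Ω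
  set ρ : Measure ℝ := P.map g with hρdef
  have hmap : ∀ A : Set ℝ, ρ A = P (g ⁻¹' A) := fun A => hg.map_apply P A
  have : IsProbabilityMeasure ρ := by
    constructor; rw [hmap]; simp
  have hatom : ∀ x : ℝ, ρ {x} = 0 := by
    intro x
    rw [hmap]
    rcases eq_empty_or_nonempty (g ⁻¹' {x}) with he | ⟨y, hy⟩
    · simp [he]
    · have : g ⁻¹' {x} = {y} := by
        apply Subset.antisymm
        · intro z hz
          simp only [mem_preimage, mem_singleton_iff] at *
          exact hg.injective (hz.trans hy.symm)
        · simp only [singleton_subset_iff]; exact hy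
      rw [this]; exact hP y
  set F := cdf ρ with hF
  have hFcont : Continuous (cdf ρ) := aux_cdf_cont ρ hatom
  -- quantile
  set q : ℝ → ℝ := fun s => sInf {x | s ≤ cdf ρ x} with hq
  have hne : ∀ s : ℝ, s < 1 → {x | s ≤ cdf ρ x}.Nonempty := by
    intro s hs
    have := (tendsto_cdf_atTop ρ).eventually_const_le hs
    rcases this.exists with ⟨x, hx⟩
    exact ⟨x, hx⟩
  have hbdd : ∀ s : ℝ, 0 < s → BddBelow {x | s ≤ cdf ρ x} := by
    intro s hs
    have := (tendsto_cdf_atBot ρ).eventually_lt_const hs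
    rcases this.exists with ⟨x0, hx0⟩
    refine ⟨x0, fun y hy => ?_⟩
    by_contra hc
    push_neg at hc
    exact absurd (le_trans hy ((cdf ρ).mono hc.le)) (not_le.2 hx0)
  have hqval : ∀ s ∈ Ioo (0:ℝ) 1, cdf ρ (q s) = s := by
    rintro s ⟨hs0, hs1⟩
    have hcl : IsClosed {x | s ≤ cdf ρ x} := isClosed_le continuous_const hFcont
    have hmem := hcl.csInf_mem (hne s hs1) (hbdd s hs0)
    refine le_antisymm ?_ hmem
    by_contra hc
    push_neg at hc
    have hopen : IsOpen {x | s < cdf ρ x} := isOpen_lt continuous_const hFcont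
    rcases Metric.isOpen_iff.1 hopen _ hc with ⟨ε, hε, hball⟩
    have hball2 : q s - ε/2 ∈ Metric.ball (q s) ε := by
      rw [Metric.mem_ball, Real.dist_eq, abs_of_nonpos (by linarith)]
      linarith
    have hmem2 : q s - ε/2 ∈ {x | s ≤ cdf ρ x} := by
      have h5 := hball hball2
      simp only [mem_setOf_eq] at h5 ⊢
      exact h5.le
    have hle := csInf_le (hbdd s hs0) hmem2
    have : q s ≤ q s - ε/2 := hle
    linarith
  have hqmono : ∀ s t : ℝ, 0 < s → s ≤ t → t < 1 → q s ≤ q t := by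
    intro s t hs hst ht1
    exact csInf_le_csInf (hbdd s hs) (hne t ht1)
      (fun x hx => le_trans hst hx)
  refine ⟨fun s => if 1 ≤ s then univ else if s ≤ 0 then ∅ else g ⁻¹' (Iic (q s)), ?_, ?_, ?_⟩
  · intro s
    dsimp only
    split_ifs with h1 h2
    · exact MeasurableSet.univ
    · exact MeasurableSet.empty
    · exact hg.measurable measurableSet_Iic
  · intro s t hst
    dsimp only
    by_cases h1 : 1 ≤ t
    · simp [h1]
    · rw [if_neg h1]
      by_cases h2 : t ≤ 0
      · have hs1 : ¬ (1 ≤ s) := by intro h; exact h1 (h.trans hst)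
        have hs0 : s ≤ 0 := le_trans hst h2
        simp [hs1, hs0]
      · rw [if_neg h2]
        by_cases h3 : 1 ≤ s
        · exact absurd (h3.trans hst) h1
        · rw [if_neg h3]
          by_cases h4 : s ≤ 0
          · simp [h4]
          · rw [if_neg h4]
            push_neg at h1 h2 h4
            exact preimage_mono (Iic_subset_Iic.2 (hqmono s t h4 hst h1))
  · rintro s ⟨hs0, hs1⟩
    dsimp only
    split_ifs with h1 h2
    · have : s = 1 := le_antisymm hs1 h1
      simp [this]
    · have : s = 0 := le_antisymm h2 hs0
      simp [this]
    · push_neg at h1 h2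
      rw [← hmap, ← ofReal_cdf ρ (q s), hqval s ⟨h2, h1⟩]

lemma aux_step {Ω : Type*} [MeasurableSpace Ω] (P μ : Measure Ω)
    [IsProbabilityMeasure P] [IsFiniteMeasure μ]
    (B : ℝ → Set Ω) (hBm : ∀ s, MeasurableSet (B s))
    (hBmono : ∀ s t, s ≤ t → B s ⊆ B t)
    (hBP : ∀ s ∈ Icc (0:ℝ) 1, P (B s) = ENNReal.ofReal s)
    (f : ℝ → ℝ)
    (H : ∀ S T : Set Ω, MeasurableSet S → MeasurableSet T → S ⊆ T →
      |f ((P T).toReal) - f ((P S).toReal)| ≤ (μ T).toReal - (μ S).toReal)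
    (t δ : ℝ) (ht : 0 ≤ t) (hδ : 0 < δ) (ht1 : t + δ ≤ 1)
    (m : ℕ) (hm : 1 ≤ m) (hmδ : (m:ℝ) * δ ≤ 1) :
    |f (t + δ) - f t| ≤ (μ univ).toReal / m := by
  set M := (μ univ).toReal with hM
  set W : ℕ → Set Ω := fun k => B ((k+1)*δ) \ B (k*δ) with hW
  have hWm : ∀ k, MeasurableSet (W k) := fun k => (hBm _).diff (hBm _)
  have hIccr : ∀ r : ℝ, 0 ≤ r → r ≤ (m:ℝ) → r*δ ∈ Icc (0:ℝ) 1 := by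
    intro r hr0 hrm
    constructor
    · positivity
    · calc r*δ ≤ (m:ℝ)*δ := mul_le_mul_of_nonneg_right hrm hδ.le
        _ ≤ 1 := hmδ
  -- sum of μ W k over range m is at most μ univ (in reals)
  have hdisj : (↑(Finset.range m) : Set ℕ).PairwiseDisjoint W := by
    intro i hi j hj hij
    wlog h : i < j generalizing i j
    · exact (this hj hi hij.symm (by omega)).symm
    apply Set.disjoint_left.2
    intro x hxi hxj
    have h1 : x ∈ B ((i+1)*δ) := hxi.1
    have h2 : x ∈ B ((j:ℝ)*δ) := hBmono _ _ (by
      apply mul_le_mul_of_nonneg_right _ hδ.le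
      have : (i:ℝ) + 1 ≤ (j:ℝ) := by exact_mod_cast h
      linarith) h1
    exact hxj.2 h2
  have hsum : ∑ k ∈ Finset.range m, (μ (W k)).toReal ≤ M := by
    rw [← ENNReal.toReal_sum (fun a _ => measure_ne_top μ _)]
    rw [← measure_biUnion_finset hdisj (fun k _ => hWm k)]
    exact ENNReal.toReal_mono (measure_ne_top μ _) (measure_mono (subset_univ _))
  have hMnn : 0 ≤ M := ENNReal.toReal_nonneg
  obtain ⟨k, hkmem, hk⟩ : ∃ k ∈ Finset.range m, (μ (W k)).toReal ≤ M / m := by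
    apply Finset.exists_le_of_sum_le ⟨0, Finset.mem_range.2 hm⟩
    rw [Finset.sum_const, Finset.card_range, nsmul_eq_mul]
    rw [mul_div_cancel₀]
    · exact hsum
    · exact Nat.cast_ne_zero.2 (by omega)
  have hklt : k < m := Finset.mem_range.1 hkmem
  set t' := t + δ with ht'
  have ht'1 : t' ≤ 1 := ht1
  have ht'0 : 0 ≤ t' := by positivity
  have hkm : ((k:ℝ)+1) ≤ (m:ℝ) := by exact_mod_cast hklt
  have hIcc0 : (k:ℝ)*δ ∈ Icc (0:ℝ) 1 := hIccr _ (by positivity) (by linarith)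
  have hIcc1 : ((k:ℝ)+1)*δ ∈ Icc (0:ℝ) 1 := hIccr _ (by positivity) hkm
  have hsub01 : B ((k:ℝ)*δ) ⊆ B (((k:ℝ)+1)*δ) := hBmono _ _ (by nlinarith)
  have hPW : P (W k) = ENNReal.ofReal δ := by
    show P (B (((k:ℝ)+1)*δ) \ B ((k:ℝ)*δ)) = _
    rw [measure_diff hsub01 (hBm _).nullMeasurableSet (measure_ne_top P _),
      hBP _ hIcc1, hBP _ hIcc0, ← ENNReal.ofReal_sub _ (by positivity)]
    ring_nf
  -- construct the link S ⊆ T with P S = t, P T = t', T \ S = W k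
  have key : ∃ S T : Set Ω, MeasurableSet S ∧ MeasurableSet T ∧ S ⊆ T ∧
      P S = ENNReal.ofReal t ∧ P T = ENNReal.ofReal t' ∧ μ T = μ S + μ (W k) := by
    by_cases hcase : t ≤ (k:ℝ)*δ
    · refine ⟨B t, B t ∪ W k, hBm t, (hBm t).union (hWm k), subset_union_left, ?_, ?_, ?_⟩
      · exact hBP t ⟨ht, by linarith⟩
      · have hdisjBW : Disjoint (B t) (W k) := by
          apply Set.disjoint_left.2
          intro x hx hxW
          exact hxW.2 (hBmono _ _ hcase hx)
        rw [measure_union hdisjBW (hWm k), hBP t ⟨ht, by linarith⟩, hPW,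
          ← ENNReal.ofReal_add ht hδ.le]
      · have hdisjBW : Disjoint (B t) (W k) := by
          apply Set.disjoint_left.2
          intro x hx hxW
          exact hxW.2 (hBmono _ _ hcase hx)
        rw [measure_union hdisjBW (hWm k)]
    · push_neg at hcase
      have hk1t' : ((k:ℝ)+1)*δ ≤ t' := by nlinarith
      have hsub1t' : B (((k:ℝ)+1)*δ) ⊆ B t' := hBmono _ _ hk1t'
      refine ⟨B ((k:ℝ)*δ) ∪ (B t' \ B (((k:ℝ)+1)*δ)), B t',
        (hBm _).union ((hBm _).diff (hBm _)), hBm _, ?_, ?_, hBP t' ⟨ht'0, ht'1⟩, ?_⟩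
      · apply union_subset (hBmono _ _ (by nlinarith))
        exact diff_subset
      · have hd : Disjoint (B ((k:ℝ)*δ)) (B t' \ B (((k:ℝ)+1)*δ)) := by
          apply Set.disjoint_left.2
          intro x hx hxd
          exact hxd.2 (hsub01 hx)
        rw [measure_union hd ((hBm _).diff (hBm _)),
          measure_diff hsub1t' (hBm _).nullMeasurableSet (measure_ne_top P _),
          hBP _ hIcc0, hBP _ ⟨ht'0, ht'1⟩, hBP _ hIcc1,
          ← ENNReal.ofReal_sub _ (by positivity), ← ENNReal.ofReal_add (by positivity) (by nlinarith)]
        congr 1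
        ring
      · have hTS : B t' = (B ((k:ℝ)*δ) ∪ (B t' \ B (((k:ℝ)+1)*δ))) ∪ W k := by
          apply Subset.antisymm
          · intro x hx
            by_cases hx2 : x ∈ B (((k:ℝ)+1)*δ)
            · by_cases hx3 : x ∈ B ((k:ℝ)*δ)
              · exact Or.inl (Or.inl hx3)
              · exact Or.inr ⟨hx2, hx3⟩
            · exact Or.inl (Or.inr ⟨hx, hx2⟩)
          · rintro x (h | h)
            · rcases h with h | h
              · exact hBmono _ _ (by nlinarith) h
              · exact h.1
            · exact hsub1t' h.1
        have hdS : Disjoint (B ((k:ℝ)*δ) ∪ (B t' \ B (((k:ℝ)+1)*δ))) (W k) := by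
          apply Set.disjoint_left.2
          rintro x (h | h) hxW
          · exact hxW.2 (hBmono _ _ (le_refl _) h)
          · exact h.2 hxW.1
        conv_lhs => rw [hTS]
        exact measure_union hdS (hWm k)
  obtain ⟨S, T, hSm, hTm, hST, hPS, hPT, hμT⟩ := key
  have hbound := H S T hSm hTm hST
  rw [hPT, hPS, ENNReal.toReal_ofReal ht'0, ENNReal.toReal_ofReal ht] at hbound
  have hμeq : (μ T).toReal - (μ S).toReal = (μ (W k)).toReal := by
    rw [hμT, ENNReal.toReal_add (measure_ne_top μ _) (measure_ne_top μ _)]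
    ring
  rw [hμeq] at hbound
  exact hbound.trans hk

lemma aux_global (f : ℝ → ℝ) (M : ℝ) (hMnn : 0 ≤ M)
    (step : ∀ t δ : ℝ, 0 ≤ t → 0 < δ → t + δ ≤ 1 → ∀ m : ℕ, 1 ≤ m → (m:ℝ)*δ ≤ 1 →
      |f (t+δ) - f t| ≤ M / m) :
    ∀ a ∈ Icc (0:ℝ) 1, ∀ b ∈ Icc (0:ℝ) 1, a ≤ b → |f b - f a| ≤ M * (b - a) := by
  rintro a ⟨ha0, ha1⟩ b ⟨hb0, hb1⟩ hab
  rcases eq_or_lt_of_le hab with rfl | hab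
  · simp
  have hba0 : 0 < b - a := by linarith
  have hba1 : b - a ≤ 1 := by linarith
  have main : ∀ n : ℕ, 2 ≤ n → |f b - f a| ≤ M * (b - a) / (1 - (b-a)/n) := by
    intro n hn
    have hn0 : (0:ℝ) < n := by positivity
    set δ := (b - a)/n with hδdef
    have hδ : 0 < δ := by positivity
    have hδhalf : δ ≤ 1/2 := by
      rw [hδdef, div_le_div_iff₀ hn0 (by norm_num)]
      have : (2:ℝ) ≤ n := by exact_mod_cast hn
      nlinarith
    set m := ⌊1/δ⌋₊ with hmdef
    have hm1 : 1 ≤ m := by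
      apply Nat.le_floor
      rw [Nat.cast_one, le_div_iff₀ hδ, one_mul]
      linarith
    have hmδ : (m:ℝ)*δ ≤ 1 := by
      have := Nat.floor_le (by positivity : (0:ℝ) ≤ 1/δ)
      calc (m:ℝ)*δ ≤ (1/δ)*δ := mul_le_mul_of_nonneg_right this hδ.le
        _ = 1 := by field_simp
    have hmlb : (1-δ)/δ < (m:ℝ) := by
      have h1 := Nat.sub_one_lt_floor (1/δ)
      have : (1:ℝ)/δ - 1 = (1-δ)/δ := by field_simp
      rw [this] at h1
      exact h1
    have hmlb0 : 0 < (1-δ)/δ := by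
      apply div_pos _ hδ
      linarith
    have hstepbound : M / m ≤ M * δ / (1 - δ) := by
      calc M / m ≤ M / ((1-δ)/δ) := by
            apply div_le_div_of_nonneg_left hMnn hmlb0 hmlb.le
        _ = M * δ / (1-δ) := by
            rw [div_div_eq_mul_div]
    -- telescoping
    have hnd : (n:ℝ) * δ = b - a := by
      rw [hδdef]
      field_simp
    set g : ℕ → ℝ := fun i => f (a + i*δ) with hg
    have hgn : g n = f b := by
      show f (a + (n:ℝ)*δ) = f b
      have : a + (n:ℝ)*δ = b := by linarith
      rw [this]
    have hg0 : g 0 = f a := by simp [hg]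
    have htel : ∑ i ∈ Finset.range n, (g (i+1) - g i) = g n - g 0 :=
      Finset.sum_range_sub g n
    have hterm : ∀ i ∈ Finset.range n, |g (i+1) - g i| ≤ M * δ / (1 - δ) := by
      intro i hi
      have hi' : i + 1 ≤ n := Finset.mem_range.1 hi
      have hst : a + (i:ℝ)*δ + δ ≤ 1 := by
        have : ((i:ℝ)+1) ≤ n := by exact_mod_cast hi'
        have h2 : a + ((i:ℝ)+1)*δ ≤ a + (n:ℝ)*δ := by nlinarith
        nlinarith
      have := step (a + (i:ℝ)*δ) δ (by positivity) hδ hst m hm1 hmδ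
      have heq : g (i+1) = f (a + (i:ℝ)*δ + δ) := by
        show f (a + ((i:ℕ)+1 : ℕ)*δ) = f (a + (i:ℝ)*δ + δ)
        have : ((i:ℕ)+1 : ℕ) * δ = (i:ℝ)*δ + δ := by push_cast; ring
        rw [this, ← add_assoc]
      rw [heq] at *
      calc |f (a + (i:ℝ)*δ + δ) - g i| ≤ M / m := this
        _ ≤ M * δ / (1-δ) := hstepbound
    calc |f b - f a| = |∑ i ∈ Finset.range n, (g (i+1) - g i)| := by
          rw [htel, hgn, hg0]
      _ ≤ ∑ i ∈ Finset.range n, |g (i+1) - g i| := Finset.abs_sum_le_sum_abs _ _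
      _ ≤ ∑ _i ∈ Finset.range n, M * δ / (1-δ) := Finset.sum_le_sum hterm
      _ = n * (M * δ / (1-δ)) := by
          rw [Finset.sum_const, Finset.card_range, nsmul_eq_mul]
      _ = M * (b-a) / (1 - δ) := by
          rw [hδdef]
          field_simp
  -- take the limit n → ∞
  have hlim : Tendsto (fun n : ℕ => M * (b - a) / (1 - (b-a)/n)) atTop
      (𝓝 (M * (b - a) / (1 - 0))) := by
    apply Tendsto.div tendsto_const_nhds
    · exact tendsto_const_nhds.sub (tendsto_const_div_atTop_nhds_zero_nat (b-a))
    · norm_num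
  have hev : ∀ᶠ n : ℕ in atTop, |f b - f a| ≤ M * (b - a) / (1 - (b-a)/n) :=
    eventually_atTop.2 ⟨2, fun n hn => main n hn⟩
  have := ge_of_tendsto hlim hev
  simpa using this


lemma aux_part2 {Ω : Type*} [MeasurableSpace Ω] (P : Measure Ω) [IsProbabilityMeasure P]
    (f : ℝ → ℝ) (K : ℝ≥0) (hL : LipschitzOnWith K f (Set.Icc 0 1))
    (S T : Set Ω) (hST : S ⊆ T) :
    |f ((P T).toReal) - f ((P S).toReal)| ≤ (K:ℝ) * ((P T).toReal - (P S).toReal) := by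
  have hmem : ∀ A : Set Ω, (P A).toReal ∈ Icc (0:ℝ) 1 := by
    intro A
    refine ⟨ENNReal.toReal_nonneg, ?_⟩
    have := ENNReal.toReal_mono (measure_ne_top P univ) (measure_mono (subset_univ A))
    simpa using this
  have hmono : (P S).toReal ≤ (P T).toReal :=
    ENNReal.toReal_mono (measure_ne_top P T) (measure_mono hST)
  have h1 := (lipschitzOnWith_iff_dist_le_mul.1 hL) _ (hmem T) _ (hmem S)
  rw [Real.dist_eq, Real.dist_eq, abs_of_nonneg (sub_nonneg.2 hmono)] at h1
  exact h1

/-- For a scalar measure game `ν = f ∘ λ`, with `λ` a nonatomic probability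
measure: `ν` is a Lipschitz game (some `μ ∈ NA⁺` satisfies
`|ν T - ν S| ≤ μ T - μ S` for all links `S ⊆ T`) iff `f` is Lipschitz on `[0,1]`;
moreover, for `L` a Lipschitz constant of `f`, one may take `μ = L λ`. -/
theorem stmt13 {Ω : Type*} [MeasurableSpace Ω] [StandardBorelSpace Ω]
    (P : Measure Ω) [IsProbabilityMeasure P] (hP : Nonatomic P)
    (f : ℝ → ℝ) (hf0 : f 0 = 0) :
    ((∃ μ : Measure Ω, IsFiniteMeasure μ ∧ Nonatomic μ ∧
        (∀ S T : Set Ω, MeasurableSet S → MeasurableSet T → S ⊆ T →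
          |f ((P T).toReal) - f ((P S).toReal)| ≤ (μ T).toReal - (μ S).toReal)) ↔
      ∃ L : NNReal, LipschitzOnWith L f (Set.Icc 0 1)) ∧
    (∀ L : NNReal, LipschitzOnWith L f (Set.Icc 0 1) →
      ∀ S T : Set Ω, MeasurableSet S → MeasurableSet T → S ⊆ T →
        |f ((P T).toReal) - f ((P S).toReal)| ≤
          (((L : ℝ≥0∞) • P) T).toReal - (((L : ℝ≥0∞) • P) S).toReal) := by
  have hsmul : ∀ (K : ℝ≥0) (A : Set Ω), (((K : ℝ≥0∞) • P) A).toReal = (K:ℝ) * (P A).toReal := by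
    intro K A
    rw [Measure.smul_apply, smul_eq_mul, ENNReal.toReal_mul, ENNReal.coe_toReal]
  constructor
  · constructor
    · rintro ⟨μ, hfin, _hna, H⟩
      have hPsing : ∀ x : Ω, P {x} = 0 := by
        intro x
        by_contra h
        obtain ⟨B, hBm, hBsub, hBpos, hBlt⟩ :=
          hP {x} (measurableSet_singleton x) (zero_lt_iff.2 h)
        rcases subset_singleton_iff_eq.1 hBsub with rfl | rfl
        · simp at hBpos
        · exact absurd hBlt (lt_irrefl _)
      obtain ⟨B, hBm, hBmono, hBP⟩ := aux_chain P hPsing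
      set M := (μ univ).toReal with hM
      refine ⟨M.toNNReal, ?_⟩
      have glob := aux_global f M ENNReal.toReal_nonneg (fun t δ ht hδ ht1 m hm hmδ =>
        aux_step P μ B hBm hBmono hBP f H t δ ht hδ ht1 m hm hmδ)
      rw [lipschitzOnWith_iff_dist_le_mul]
      intro x hx y hy
      rw [Real.dist_eq, Real.dist_eq, Real.coe_toNNReal _ ENNReal.toReal_nonneg]
      rcases le_total x y with h | h
      · rw [abs_sub_comm (f x) (f y), abs_sub_comm x y,
          abs_of_nonneg (by linarith : (0:ℝ) ≤ y - x)]
        exact glob x hx y hy h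
      · rw [abs_of_nonneg (by linarith : (0:ℝ) ≤ x - y)]
        exact glob y hy x hx h
    · rintro ⟨L, hL⟩
      refine ⟨((L + 1 : ℝ≥0) : ℝ≥0∞) • P, ?_, ?_, ?_⟩
      · constructor
        rw [Measure.smul_apply, smul_eq_mul, measure_univ, mul_one]
        exact ENNReal.coe_lt_top
      · intro A hA hpos
        have hconst0 : ((L + 1 : ℝ≥0) : ℝ≥0∞) ≠ 0 := by
          simp
        have hconsttop : ((L + 1 : ℝ≥0) : ℝ≥0∞) ≠ ⊤ := ENNReal.coe_ne_top
        have hpos' : 0 < P A := by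
          rw [Measure.smul_apply, smul_eq_mul] at hpos
          rcases eq_or_ne (P A) 0 with h0 | h0
          · rw [h0, mul_zero] at hpos
            exact absurd hpos (lt_irrefl _)
          · exact zero_lt_iff.2 h0
        obtain ⟨C, hCm, hCsub, hCpos, hClt⟩ := hP A hA hpos'
        refine ⟨C, hCm, hCsub, ?_, ?_⟩
        · rw [Measure.smul_apply, smul_eq_mul]
          exact ENNReal.mul_pos hconst0 hCpos.ne'
        · rw [Measure.smul_apply, Measure.smul_apply, smul_eq_mul, smul_eq_mul]
          exact (ENNReal.mul_lt_mul_iff_right hconst0 hconsttop).2 hClt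
      · intro S T hS hT hST
        have := aux_part2 P f L hL S T hST
        have hone : |f ((P T).toReal) - f ((P S).toReal)| ≤
            ((L:ℝ) + 1) * ((P T).toReal - (P S).toReal) := by
          have hmono : (P S).toReal ≤ (P T).toReal :=
            ENNReal.toReal_mono (measure_ne_top P T) (measure_mono hST)
          nlinarith [this]
        rw [hsmul (L+1) T, hsmul (L+1) S]
        push_cast
        nlinarith [hone]
  · intro L hL S T hS hT hST
    have := aux_part2 P f L hL S T hST
    rw [hsmul L T, hsmul L S]
    linarith
end

section
/- Let ν be a Lipschitz game that is Burkill–Cesari integrable (ν∈Q=BC∩AC_∞), and let λ∈NA be a measure with λ−ν monotone. Then λ−∂⁺_∅(ν) is a nonnegative measure, i.e. ∂⁺_∅(ν,E)≤λ(E) for every E∈Σ. Consequently ν_* ≤ ∂⁺_∅(ν) ≤ ν^* setwise, where ν^*=g.l.b.{λ∈NA: ν⪯λ} and ν_*=l.u.b.{λ∈NA: λ⪯ν}; that is, the Burkill–Cesari integral is a Milnor operator on Q. -/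
open MeasureTheory Set

def DominatedBy {Ω : Type*} [MeasurableSpace Ω] (ν : Set Ω → ℝ) (μ : Measure Ω) : Prop :=
  (∀ A B : Set Ω, MeasurableSet A → MeasurableSet B → A ⊆ B →
      (μ A).toReal - ν A ≤ (μ B).toReal - ν B) ∧
  (∀ A B : Set Ω, MeasurableSet A → MeasurableSet B → A ⊆ B →
      (μ A).toReal + ν A ≤ (μ B).toReal + ν B)

/-- Disjointify a finite family of small sets keeping the union. -/
lemma bc_disjointify {α : Type*} [MeasurableSpace α] (ρ : Measure α) (d : ENNReal) :
    ∀ s : Finset (Set α), (∀ B ∈ s, MeasurableSet B ∧ ρ B < d) →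
      ∃ D : Finset (Set α), (∀ I ∈ D, MeasurableSet I) ∧
        ((D : Set (Set α)).PairwiseDisjoint id) ∧ ⋃₀ (D : Set (Set α)) = ⋃₀ (s : Set (Set α)) ∧
        ∀ I ∈ D, ρ I < d := by
  classical
  intro s
  induction s using Finset.induction_on with
  | empty => exact fun _ => ⟨∅, by simp, by simp, by simp, by simp⟩
  | @insert B s hBs ih =>
    intro hs
    obtain ⟨D, hDm, hDd, hDu, hDρ⟩ := ih (fun C hC => hs C (Finset.mem_insert_of_mem hC))
    have hsm : MeasurableSet (⋃₀ (s : Set (Set α))) :=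
      MeasurableSet.sUnion s.countable_toSet (fun C hC => (hs C (Finset.mem_insert_of_mem hC)).1)
    set B' : Set α := B \ ⋃₀ (s : Set (Set α)) with hB'
    have hB'm : MeasurableSet B' := ((hs B (Finset.mem_insert_self B s)).1).diff hsm
    refine ⟨insert B' D, ?_, ?_, ?_, ?_⟩
    · intro I hI
      rcases Finset.mem_insert.1 hI with rfl | hI
      · exact hB'm
      · exact hDm I hI
    · intro x hx y hy hxy
      simp only [Finset.coe_insert, Set.mem_insert_iff] at hx hy
      have hsubU : ∀ I ∈ D, (I : Set α) ⊆ ⋃₀ (s : Set (Set α)) := by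
        intro I hI
        rw [← hDu]
        exact subset_sUnion_of_mem hI
      have hdisj : ∀ I ∈ D, Disjoint B' I := fun I hI =>
        Set.disjoint_sdiff_left.mono_right (hsubU I hI)
      rcases hx with rfl | hx
      · rcases hy with rfl | hy
        · exact absurd rfl hxy
        · exact hdisj y hy
      · rcases hy with rfl | hy
        · exact (hdisj x hx).symm
        · exact hDd hx hy hxy
    · simp only [Finset.coe_insert, Set.sUnion_insert, hDu]
      rw [hB']
      ext z
      simp only [Set.mem_union, Set.mem_diff]
      tauto
    · intro I hI
      rcases Finset.mem_insert.1 hI with rfl | hI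
      · exact lt_of_le_of_lt (measure_mono Set.diff_subset) (hs B (Finset.mem_insert_self B s)).2
      · exact hDρ I hI

/-- A finite atomless measure on ℝ admits a finite measurable partition of `univ`
into pieces of measure `< d`. -/
lemma bc_fine_partition_real (ρ : Measure ℝ) [IsFiniteMeasure ρ] [NullSingletonClass ρ]
    (d : ENNReal) (hd : 0 < d) :
    ∃ D : Finset (Set ℝ), (∀ I ∈ D, MeasurableSet I) ∧
      ((D : Set (Set ℝ)).PairwiseDisjoint id) ∧ ⋃₀ (D : Set (Set ℝ)) = Set.univ ∧
      ∀ I ∈ D, ρ I < d := by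
  classical
  -- small balls around every point
  have hball : ∀ x : ℝ, ∃ ε > 0, ρ (Metric.ball x ε) < d := by
    intro x
    have hten : Filter.Tendsto (fun r => ρ (Metric.cthickening r {x})) (nhds 0) (nhds (ρ {x})) :=
      tendsto_measure_cthickening_of_isClosed
        ⟨1, one_pos, measure_ne_top ρ _⟩ isClosed_singleton
    have h0 : ρ ({x} : Set ℝ) = 0 := measure_singleton x
    have hev : ∀ᶠ r in nhds (0:ℝ), ρ (Metric.cthickening r {x}) < d := by
      apply hten.eventually_lt_const
      rw [h0]; exact hd
    rw [Metric.eventually_nhds_iff] at hev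
    obtain ⟨ε, hε, h⟩ := hev
    refine ⟨ε / 2, by linarith, ?_⟩
    have hc := h (y := ε / 2) (by
      simp only [Real.dist_eq, sub_zero]
      rw [abs_of_pos (by linarith : (0:ℝ) < ε/2)]
      linarith)
    calc ρ (Metric.ball x (ε/2)) ≤ ρ (Metric.cthickening (ε/2) {x}) := by
          apply measure_mono
          rw [Metric.cthickening_singleton x (by linarith)]
          exact Metric.ball_subset_closedBall
      _ < d := hc
  choose eps heps hρeps using hball
  -- tightness
  have htight : ∃ M : ℕ, ρ ((Set.Icc (-(M:ℝ)) M)ᶜ) < d := by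
    have hten : Filter.Tendsto (fun n : ℕ => ρ ((Set.Icc (-(n:ℝ)) n)ᶜ)) Filter.atTop
        (nhds (ρ (⋂ n : ℕ, (Set.Icc (-(n:ℝ)) n)ᶜ))) := by
      have := tendsto_measure_iInter_atTop (μ := ρ)
        (s := fun n : ℕ => (Set.Icc (-(n:ℝ)) n)ᶜ)
        (fun n => (measurableSet_Icc.compl).nullMeasurableSet)
        (fun n m hnm => Set.compl_subset_compl.2 (Set.Icc_subset_Icc (by
          simp only [neg_le_neg_iff, Nat.cast_le]; exact hnm) (by exact_mod_cast hnm)))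
        ⟨0, measure_ne_top ρ _⟩
      exact this
    have hempty : (⋂ n : ℕ, (Set.Icc (-(n:ℝ)) n)ᶜ) = ∅ := by
      ext x
      simp only [Set.mem_iInter, Set.mem_compl_iff, Set.mem_Icc, Set.mem_empty_iff_false,
        iff_false, not_forall, not_not]
      obtain ⟨n, hn⟩ := exists_nat_ge |x|
      exact ⟨n, ⟨by linarith [neg_abs_le x], by linarith [le_abs_self x]⟩⟩
    rw [hempty, measure_empty] at hten
    have := hten.eventually_lt_const hd
    obtain ⟨M, hM⟩ := this.exists
    exact ⟨M, hM⟩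
  obtain ⟨M, hM⟩ := htight
  -- finite subcover of the compact interval
  obtain ⟨t, ht⟩ := (isCompact_Icc (a := -(M:ℝ)) (b := (M:ℝ))).elim_finite_subcover
    (fun x : ℝ => Metric.ball x (eps x)) (fun x => Metric.isOpen_ball)
    (fun x hx => Set.mem_iUnion.2 ⟨x, Metric.mem_ball_self (heps x)⟩)
  set s : Finset (Set ℝ) :=
    insert ((Set.Icc (-(M:ℝ)) M)ᶜ) (t.image (fun x => Metric.ball x (eps x))) with hs
  have hsmall : ∀ B ∈ s, MeasurableSet B ∧ ρ B < d := by
    intro B hB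
    rw [hs, Finset.mem_insert] at hB
    rcases hB with rfl | hB
    · exact ⟨measurableSet_Icc.compl, hM⟩
    · obtain ⟨x, _, rfl⟩ := Finset.mem_image.1 hB
      exact ⟨Metric.isOpen_ball.measurableSet, hρeps x⟩
  have hcover : ⋃₀ (s : Set (Set ℝ)) = Set.univ := by
    apply Set.eq_univ_of_univ_subset
    intro z _
    by_cases hz : z ∈ Set.Icc (-(M:ℝ)) M
    · obtain ⟨x, hx, hzx⟩ := Set.mem_iUnion₂.1 (ht hz)
      exact ⟨Metric.ball x (eps x), by
        rw [hs]
        exact Finset.mem_coe.2 (Finset.mem_insert_of_mem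
          (Finset.mem_image.2 ⟨x, hx, rfl⟩)), hzx⟩
    · exact ⟨(Set.Icc (-(M:ℝ)) M)ᶜ, by rw [hs]; exact Finset.mem_coe.2 (Finset.mem_insert_self _ _), hz⟩
  obtain ⟨D, h1, h2, h3, h4⟩ := bc_disjointify ρ d s hsmall
  exact ⟨D, h1, h2, h3.trans hcover, h4⟩

lemma bc_subsingleton_measure_zero {Ω : Type*} [MeasurableSpace Ω] {μ : Measure Ω}
    (hμ : Nonatomic μ) {A : Set Ω} (hA : MeasurableSet A) (hss : A.Subsingleton) :
    μ A = 0 := by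
  by_contra h
  have hpos : 0 < μ A := pos_iff_ne_zero.2 h
  obtain ⟨B, hBm, hBA, hB0, hBA'⟩ := hμ A hA hpos
  rcases hss.eq_empty_or_singleton with rfl | ⟨x, rfl⟩
  · rw [Set.subset_empty_iff] at hBA
    subst hBA; simp at hB0
  · rcases (Set.subset_singleton_iff_eq).1 hBA with rfl | rfl
    · simp at hB0
    · exact absurd hBA' (lt_irrefl _)

lemma bc_exists_fine_partition {Ω : Type*} [MeasurableSpace Ω] [StandardBorelSpace Ω]
    (μ : Measure Ω) [IsFiniteMeasure μ] (hμ : Nonatomic μ)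
    {E : Set Ω} (hE : MeasurableSet E) {δ : ℝ} (hδ : 0 < δ) :
    ∃ D : Finset (Set Ω), IsPartition D E ∧ ∀ I ∈ D, (μ I).toReal < δ := by
  classical
  obtain ⟨f, hf⟩ := exists_measurableEmbedding_real Ω
  set ρ : Measure ℝ := Measure.map f (μ.restrict E) with hρ
  have hρ_apply : ∀ S : Set ℝ, MeasurableSet S → ρ S = μ (E ∩ f ⁻¹' S) := by
    intro S hS
    rw [hρ, Measure.map_apply hf.measurable hS,
      Measure.restrict_apply (hf.measurable hS), Set.inter_comm]
  have : IsFiniteMeasure ρ := by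
    constructor
    rw [hρ_apply _ MeasurableSet.univ]
    exact lt_of_le_of_lt (measure_mono (Set.inter_subset_left)) (measure_lt_top μ E)
  have : NullSingletonClass ρ := by
    constructor
    intro x
    rw [hρ_apply _ (measurableSet_singleton x)]
    apply le_antisymm _ zero_le
    calc μ (E ∩ f ⁻¹' {x}) ≤ μ (f ⁻¹' {x}) := measure_mono Set.inter_subset_right
      _ = 0 := bc_subsingleton_measure_zero hμ (hf.measurable (measurableSet_singleton x))
          (fun a ha b hb => hf.injective (ha.trans hb.symm))
  obtain ⟨D₀, h1, h2, h3, h4⟩ := bc_fine_partition_real ρ (ENNReal.ofReal δ)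
    (by simp [hδ])
  refine ⟨D₀.image (fun S => E ∩ f ⁻¹' S), ⟨?_, ?_, ?_⟩, ?_⟩
  · intro I hI
    obtain ⟨S, hS, rfl⟩ := Finset.mem_image.1 hI
    exact hE.inter (hf.measurable (h1 S hS))
  · intro Y hY Z hZ hYZ
    simp only [Finset.coe_image, Set.mem_image, Finset.mem_coe] at hY hZ
    obtain ⟨S, hS, rfl⟩ := hY
    obtain ⟨T, hT, rfl⟩ := hZ
    have hST : S ≠ T := by rintro rfl; exact hYZ rfl
    have := h2 hS hT hST
    exact Set.disjoint_of_subset Set.inter_subset_right Set.inter_subset_right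
      (Disjoint.preimage f this)
  · rw [Finset.coe_image, Set.sUnion_image]
    have : ⋃ S ∈ (D₀ : Set (Set ℝ)), E ∩ f ⁻¹' S = E ∩ f ⁻¹' (⋃ S ∈ (D₀ : Set (Set ℝ)), S) := by
      rw [Set.preimage_iUnion₂]
      ext z; simp
    rw [this]
    have : (⋃ S ∈ (D₀ : Set (Set ℝ)), S) = Set.univ := by rw [← Set.sUnion_eq_biUnion, h3]
    rw [this]; simp
  · intro I hI
    obtain ⟨S, hS, rfl⟩ := Finset.mem_image.1 hI
    have := h4 S hS
    rw [hρ_apply S (h1 S hS)] at this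
    exact ENNReal.toReal_lt_of_lt_ofReal this

lemma bc_signed_sum {Ω : Type*} [MeasurableSpace Ω] (m : SignedMeasure Ω) :
    ∀ D : Finset (Set Ω), (∀ I ∈ D, MeasurableSet I) →
      ((D : Set (Set Ω)).PairwiseDisjoint id) →
      m (⋃₀ (D : Set (Set Ω))) = ∑ I ∈ D, m I := by
  classical
  intro D
  induction D using Finset.induction_on with
  | empty => intro _ _; simp [m.empty']
  | @insert B D hBD ih =>
    intro hm hd
    rw [Finset.coe_insert] at hd
    have hBne : ∀ I ∈ D, B ≠ I := by
      rintro I hI rfl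
      exact hBD hI
    have hdisj : Disjoint B (⋃₀ (D : Set (Set Ω))) := by
      rw [Set.disjoint_sUnion_right]
      intro I hI
      exact hd (Set.mem_insert _ _) (Set.mem_insert_of_mem _ hI) (hBne I hI)
    have hmB : MeasurableSet B := hm B (Finset.mem_insert_self _ _)
    have hmU : MeasurableSet (⋃₀ (D : Set (Set Ω))) :=
      MeasurableSet.sUnion D.countable_toSet (fun I hI => hm I (Finset.mem_insert_of_mem hI))
    rw [Finset.coe_insert, Set.sUnion_insert,
      VectorMeasure.of_union hdisj hmB hmU,
      ih (fun I hI => hm I (Finset.mem_insert_of_mem hI))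
        (hd.subset (by simp [Set.subset_insert])),
      Finset.sum_insert hBD]

/-- For `ν ∈ Q = BC ∩ AC_∞` with Burkill–Cesari integral `L`: if `m ∈ NA` and
`m - ν` is monotone then `L ≤ m` setwise; dually, if `ν - m'` is monotone then
`m' ≤ L` setwise.  Hence `ν_* ≤ ∂⁺_∅(ν) ≤ ν^*`: the Burkill–Cesari integral is a
Milnor operator on `Q`. -/
theorem stmt16 {Ω : Type*} [MeasurableSpace Ω] [StandardBorelSpace Ω]
    (μ : Measure Ω) [IsFiniteMeasure μ] (hμ : Nonatomic μ)
    (ν : Set Ω → ℝ) (hν0 : ν ∅ = 0)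
    (hACinf : ∃ μ' : Measure Ω, IsFiniteMeasure μ' ∧ Nonatomic μ' ∧ DominatedBy ν μ')
    (L : Set Ω → ℝ)
    (hBC : ∀ E : Set Ω, MeasurableSet E → ∀ ε > 0, ∃ δ > 0,
      ∀ D : Finset (Set Ω), IsPartition D E → (∀ I ∈ D, (μ I).toReal < δ) →
        |(∑ I ∈ D, ν I) - L E| < ε) :
    (∀ m : SignedMeasure Ω,
      (∀ A B : Set Ω, MeasurableSet A → MeasurableSet B → A ⊆ B →
        m A - ν A ≤ m B - ν B) →
      ∀ E : Set Ω, MeasurableSet E → L E ≤ m E) ∧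
    (∀ m : SignedMeasure Ω,
      (∀ A B : Set Ω, MeasurableSet A → MeasurableSet B → A ⊆ B →
        ν A - m A ≤ ν B - m B) →
      ∀ E : Set Ω, MeasurableSet E → m E ≤ L E) := by
  constructor
  · intro m hm E hE
    refine le_of_forall_pos_le_add fun ε hε => ?_
    obtain ⟨δ, hδ, h⟩ := hBC E hE ε hε
    obtain ⟨D, hD, hfine⟩ := bc_exists_fine_partition μ hμ hE hδ
    have habs := h D hD hfine
    have hνm : ∀ I ∈ D, ν I ≤ m I := fun I hI => by
      have := hm ∅ I MeasurableSet.empty (hD.1 I hI) (Set.empty_subset I)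
      rw [hν0, m.empty] at this; linarith
    have hsum : ∑ I ∈ D, ν I ≤ ∑ I ∈ D, m I := Finset.sum_le_sum hνm
    have hmE : m E = ∑ I ∈ D, m I := by
      rw [← hD.2.2]; exact bc_signed_sum m D hD.1 hD.2.1
    rw [abs_lt] at habs
    linarith [habs.1]
  · intro m hm E hE
    refine le_of_forall_pos_le_add fun ε hε => ?_
    obtain ⟨δ, hδ, h⟩ := hBC E hE ε hε
    obtain ⟨D, hD, hfine⟩ := bc_exists_fine_partition μ hμ hE hδ
    have habs := h D hD hfine
    have hνm : ∀ I ∈ D, m I ≤ ν I := fun I hI => by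
      have := hm ∅ I MeasurableSet.empty (hD.1 I hI) (Set.empty_subset I)
      rw [hν0, m.empty] at this; linarith
    have hsum : ∑ I ∈ D, m I ≤ ∑ I ∈ D, ν I := Finset.sum_le_sum hνm
    have hmE : m E = ∑ I ∈ D, m I := by
      rw [← hD.2.2]; exact bc_signed_sum m D hD.1 hD.2.1
    rw [abs_lt] at habs
    linarith [habs.2]
end

section
/- Let f(x)=x·sin(log x) for x∈(0,1], f(0)=0, and λ Lebesgue measure on [0,1]. Then the game ν=f∘λ is a Lipschitz game (f is Lipschitz on [0,1]), but ν is not Burkill–Cesari integrable with respect to any mesh δ_μ, μ∈NA⁺, because lim_{x→0⁺} f(x)/x = lim_{x→0⁺} sin(log x) does not exist. -/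
open MeasureTheory Set

/-- `f(x) = x sin(log x)` for `x ∈ (0,1]`, `f(0) = 0` (note `Real.log 0 = 0`,
`Real.sin 0 = 0`, so the formula already gives `f 0 = 0`). -/
noncomputable def fLog (x : ℝ) : ℝ := x * Real.sin (Real.log x)

open Filter Topology


lemma fLog_abs_le {x : ℝ} (hx : 0 ≤ x) : |fLog x| ≤ x := by
  rw [fLog, abs_mul]
  calc |x| * |Real.sin (Real.log x)| ≤ |x| * 1 :=
        mul_le_mul_of_nonneg_left (Real.abs_sin_le_one _) (abs_nonneg x)
    _ = x := by rw [mul_one, abs_of_nonneg hx]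

lemma fLog_lip {a b : ℝ} (ha : 0 ≤ a) (hab : a ≤ b) : |fLog b - fLog a| ≤ 2 * (b - a) := by
  rcases eq_or_lt_of_le ha with h0 | hpos
  · have ha0 : fLog a = 0 := by rw [← h0]; simp [fLog]
    rw [ha0, sub_zero]
    have h1 := fLog_abs_le (le_trans ha hab)
    have hb : 0 ≤ b := le_trans ha hab
    linarith [h0.symm ▸ hab]
  · have hder : ∀ x ∈ Icc a b, HasDerivWithinAt fLog
        ((fun y : ℝ => Real.sin (Real.log y) + Real.cos (Real.log y)) x) (Icc a b) x := by
      intro x hx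
      have hx0 : 0 < x := lt_of_lt_of_le hpos hx.1
      have h1 : HasDerivAt Real.log x⁻¹ x := Real.hasDerivAt_log hx0.ne'
      have h2 : HasDerivAt (fun y : ℝ => Real.sin (Real.log y))
          (Real.cos (Real.log x) * x⁻¹) x := (Real.hasDerivAt_sin (Real.log x)).comp x h1
      have h3 : HasDerivAt (fun y : ℝ => y * Real.sin (Real.log y))
          (1 * Real.sin (Real.log x) + x * (Real.cos (Real.log x) * x⁻¹)) x :=
        (hasDerivAt_id x).mul h2
      have heq : (1 : ℝ) * Real.sin (Real.log x) + x * (Real.cos (Real.log x) * x⁻¹)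
          = Real.sin (Real.log x) + Real.cos (Real.log x) := by
        field_simp
      rw [heq] at h3
      exact h3.hasDerivWithinAt
    have hbound : ∀ x ∈ Icc a b,
        ‖(fun y : ℝ => Real.sin (Real.log y) + Real.cos (Real.log y)) x‖ ≤ 2 := by
      intro x _
      calc ‖Real.sin (Real.log x) + Real.cos (Real.log x)‖
          ≤ |Real.sin (Real.log x)| + |Real.cos (Real.log x)| := abs_add_le _ _
        _ ≤ 1 + 1 := add_le_add (Real.abs_sin_le_one _) (Real.abs_cos_le_one _)
        _ = 2 := by norm_num
    have := (convex_Icc a b).norm_image_sub_le_of_norm_hasDerivWithin_le hder hbound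
      (left_mem_Icc.2 hab) (right_mem_Icc.2 hab)
    rwa [Real.norm_eq_abs, Real.norm_eq_abs, abs_of_nonneg (sub_nonneg.2 hab)] at this

lemma exists_log_sin (v c : ℝ) (hc : 0 < c) :
    ∃ x : ℝ, 0 < x ∧ x ≤ c ∧ Real.sin (Real.log x) = Real.sin v := by
  obtain ⟨k, hk⟩ := exists_nat_ge ((v - Real.log c) / (2 * Real.pi))
  refine ⟨Real.exp (v - (k : ℝ) * (2 * Real.pi)), Real.exp_pos _, ?_, ?_⟩
  · rw [← Real.exp_log hc]
    apply Real.exp_le_exp.mpr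
    have hπ : 0 < 2 * Real.pi := by positivity
    rw [div_le_iff₀ hπ] at hk
    linarith
  · rw [Real.log_exp]
    have heq : v - (k : ℝ) * (2 * Real.pi) = v + ((-(k:ℤ) : ℤ) : ℝ) * (2 * Real.pi) := by
      push_cast; ring
    rw [heq, Real.sin_add_int_mul_two_pi]

lemma nonatomic_no_atoms {μ : Measure ℝ} (h : Nonatomic μ) (x : ℝ) : μ {x} = 0 := by
  by_contra hne
  have hpos : 0 < μ {x} := pos_iff_ne_zero.mpr hne
  obtain ⟨B, _, hBsub, hB0, hBlt⟩ := h {x} (measurableSet_singleton x) hpos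
  rcases Set.subset_singleton_iff_eq.mp hBsub with h' | h'
  · rw [h'] at hB0; simp at hB0
  · rw [h'] at hBlt; exact lt_irrefl _ hBlt

lemma small_intervals (μ : Measure ℝ) [IsFiniteMeasure μ] (h0 : ∀ x : ℝ, μ {x} = 0)
    {δ : ℝ} (hδ : 0 < δ) :
    ∃ η > 0, ∀ a b : ℝ, -1 ≤ a → b ≤ 2 → a ≤ b → b - a ≤ η → (μ (Icc a b)).toReal < δ := by
  set g : ℝ → ℝ := fun t => (μ (Iic t)).toReal with hg
  have hIio : ∀ t : ℝ, μ (Iio t) = μ (Iic t) := by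
    intro t
    conv_rhs => rw [← Set.Iio_union_right]
    refine le_antisymm (measure_mono subset_union_left) ?_
    calc μ (Iio t ∪ {t}) ≤ μ (Iio t) + μ {t} := measure_union_le _ _
      _ = μ (Iio t) := by rw [h0 t, add_zero]
  have hmono : Monotone g := fun s t h =>
    ENNReal.toReal_mono (measure_ne_top _ _) (measure_mono (Iic_subset_Iic.2 h))
  have hcont : Continuous g := by
    rw [continuous_iff_continuousAt]
    intro t
    rw [Metric.continuousAt_iff]
    intro ε hε
    have hR : Tendsto (fun n : ℕ => g (t + ((n : ℝ) + 1)⁻¹)) atTop (𝓝 (g t)) := by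
      have h2 : (⋂ n : ℕ, Iic (t + ((n : ℝ) + 1)⁻¹)) = Iic t := by
        ext z; simp only [mem_iInter, mem_Iic]
        constructor
        · intro h
          by_contra hzt
          push_neg at hzt
          obtain ⟨n, hn⟩ := exists_nat_one_div_lt (sub_pos.2 hzt)
          have h3 := h n
          rw [one_div] at hn; linarith
        · intro h n
          have : (0:ℝ) < ((n:ℝ)+1)⁻¹ := by positivity
          linarith
      have h1 : Tendsto (fun n : ℕ => μ (Iic (t + ((n : ℝ) + 1)⁻¹))) atTop (𝓝 (μ (Iic t))) := by
        have h3 := tendsto_measure_iInter_atTop (μ := μ)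
          (s := fun n : ℕ => Iic (t + ((n : ℝ) + 1)⁻¹))
          (fun n => measurableSet_Iic.nullMeasurableSet)
          (fun m n hmn => Iic_subset_Iic.2 (by gcongr))
          ⟨0, measure_ne_top μ _⟩
        rw [h2] at h3; exact h3
      exact ((ENNReal.tendsto_toReal (measure_ne_top μ _)).comp h1 : _)
    have hLft : Tendsto (fun n : ℕ => g (t - ((n : ℝ) + 1)⁻¹)) atTop (𝓝 (g t)) := by
      have h2 : (⋃ n : ℕ, Iic (t - ((n : ℝ) + 1)⁻¹)) = Iio t := by
        ext z; simp only [mem_iUnion, mem_Iic, mem_Iio]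
        constructor
        · rintro ⟨n, hn⟩
          have : (0:ℝ) < ((n:ℝ)+1)⁻¹ := by positivity
          linarith
        · intro h
          obtain ⟨n, hn⟩ := exists_nat_one_div_lt (sub_pos.2 h)
          rw [one_div] at hn
          exact ⟨n, by linarith⟩
      have h1 : Tendsto (fun n : ℕ => μ (Iic (t - ((n : ℝ) + 1)⁻¹))) atTop (𝓝 (μ (Iic t))) := by
        have h3 := tendsto_measure_iUnion_atTop (μ := μ)
          (s := fun n : ℕ => Iic (t - ((n : ℝ) + 1)⁻¹))
          (fun m n hmn => Iic_subset_Iic.2 (by gcongr))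
        rw [h2, hIio] at h3; exact h3
      exact ((ENNReal.tendsto_toReal (measure_ne_top μ _)).comp h1 : _)
    obtain ⟨n1, hn1⟩ := (hR.eventually_lt_const (by linarith : g t < g t + ε)).exists
    obtain ⟨n2, hn2⟩ := (hLft.eventually_const_lt (by linarith : g t - ε < g t)).exists
    refine ⟨min ((n1 : ℝ) + 1)⁻¹ ((n2 : ℝ) + 1)⁻¹, lt_min (by positivity) (by positivity),
      fun s hs => ?_⟩
    rw [Real.dist_eq] at hs
    have hs1 : s < t + ((n1 : ℝ) + 1)⁻¹ := by
      have := abs_lt.mp hs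
      have := min_le_left ((n1 : ℝ) + 1)⁻¹ ((n2 : ℝ) + 1)⁻¹
      linarith [this, (abs_lt.mp hs).2]
    have hs2 : t - ((n2 : ℝ) + 1)⁻¹ < s := by
      have := min_le_right ((n1 : ℝ) + 1)⁻¹ ((n2 : ℝ) + 1)⁻¹
      linarith [(abs_lt.mp hs).1]
    have hu : g s ≤ g (t + ((n1 : ℝ) + 1)⁻¹) := hmono hs1.le
    have hl : g (t - ((n2 : ℝ) + 1)⁻¹) ≤ g s := hmono hs2.le
    rw [Real.dist_eq, abs_lt]
    constructor <;> linarith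
  obtain ⟨d, hd, hUC⟩ := (Metric.uniformContinuousOn_iff).mp
    ((isCompact_Icc : IsCompact (Icc (-1:ℝ) 2)).uniformContinuousOn_of_continuous
      hcont.continuousOn) δ hδ
  refine ⟨d/2, by positivity, fun a b ha hb hab hba => ?_⟩
  have hmem_a : a ∈ Icc (-1:ℝ) 2 := ⟨ha, le_trans hab hb⟩
  have hmem_b : b ∈ Icc (-1:ℝ) 2 := ⟨le_trans ha hab, hb⟩
  have hdist : dist b a < d := by
    rw [Real.dist_eq, abs_of_nonneg (sub_nonneg.2 hab)]; linarith
  have hgb : |g b - g a| < δ := by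
    have := hUC b hmem_b a hmem_a hdist; rwa [Real.dist_eq] at this
  have hIcc : (μ (Icc a b)).toReal = g b - g a := by
    have hsub : Iio a ⊆ Iic b := fun z hz => le_trans (le_of_lt hz) hab
    have hd2 : μ (Icc a b) = μ (Iic b) - μ (Iio a) := by
      rw [← (show Iic b \ Iio a = Icc a b by ext z; simp [and_comm]), measure_diff hsub measurableSet_Iio.nullMeasurableSet
        (measure_ne_top μ _)]
    rw [hd2, ENNReal.toReal_sub_of_le (measure_mono hsub) (measure_ne_top μ _), hIio a]
  rw [hIcc]
  calc g b - g a ≤ |g b - g a| := le_abs_self _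
    _ < δ := hgb

lemma vol2_finite : IsFiniteMeasure
    (volume.restrict (Icc (0:ℝ) 1) + volume.restrict (Icc (0:ℝ) 1)) := by
  constructor
  rw [Measure.add_apply, Measure.restrict_apply_univ, Real.volume_Icc]
  simp

lemma nonatomic_two_vol :
    Nonatomic (volume.restrict (Icc (0:ℝ) 1) + volume.restrict (Icc (0:ℝ) 1)) := by
  haveI := vol2_finite
  set μ2 := volume.restrict (Icc (0:ℝ) 1) + volume.restrict (Icc (0:ℝ) 1) with hμ2
  intro A hA hApos
  set h : ℝ → ℝ := fun t => (μ2 (A ∩ Iio t)).toReal with hh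
  have key : ∀ s t : ℝ, s ≤ t → h s ≤ h t ∧ h t - h s ≤ 2 * (t - s) := by
    intro s t hst
    have hunion : A ∩ Iio t = (A ∩ Iio s) ∪ (A ∩ Ico s t) := by
      rw [← Set.inter_union_distrib_left, Set.Iio_union_Ico_eq_Iio hst]
    have hdisj : Disjoint (A ∩ Iio s) (A ∩ Ico s t) := by
      refine Set.disjoint_left.mpr fun z hz hz2 => ?_
      exact absurd hz2.2.1 (not_le.2 hz.2)
    have hmeas2 : MeasurableSet (A ∩ Ico s t) := hA.inter measurableSet_Ico
    have hadd : μ2 (A ∩ Iio t) = μ2 (A ∩ Iio s) + μ2 (A ∩ Ico s t) := by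
      rw [hunion, measure_union hdisj hmeas2]
    have hbd : (μ2 (A ∩ Ico s t)).toReal ≤ 2 * (t - s) := by
      have h1 : μ2 (A ∩ Ico s t) ≤ μ2 (Ico s t) := measure_mono inter_subset_right
      have h2 : μ2 (Ico s t) ≤ ENNReal.ofReal (t - s) + ENNReal.ofReal (t - s) := by
        rw [hμ2, Measure.add_apply]
        have h3 : volume.restrict (Icc (0:ℝ) 1) (Ico s t) ≤ ENNReal.ofReal (t - s) := by
          rw [Measure.restrict_apply measurableSet_Ico, ← Real.volume_Ico (a := s) (b := t)]
          exact measure_mono inter_subset_left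
        exact add_le_add h3 h3
      calc (μ2 (A ∩ Ico s t)).toReal
          ≤ (ENNReal.ofReal (t - s) + ENNReal.ofReal (t - s)).toReal :=
            ENNReal.toReal_mono (by simp) (le_trans h1 h2)
        _ = (t - s) + (t - s) := by
            rw [ENNReal.toReal_add ENNReal.ofReal_ne_top ENNReal.ofReal_ne_top,
              ENNReal.toReal_ofReal (sub_nonneg.2 hst)]
        _ ≤ 2 * (t - s) := by linarith
    have htr : h t = h s + (μ2 (A ∩ Ico s t)).toReal := by
      rw [hh]
      simp only []
      rw [hadd, ENNReal.toReal_add (measure_ne_top _ _) (measure_ne_top _ _)]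
    constructor
    · rw [htr]; exact le_add_of_nonneg_right ENNReal.toReal_nonneg
    · rw [htr]; linarith [ENNReal.toReal_nonneg (a := μ2 (A ∩ Ico s t))]
  have hlip : LipschitzWith 2 h := by
    apply LipschitzWith.of_dist_le_mul
    intro s t
    rcases le_total s t with hst | hts
    · obtain ⟨h1, h2⟩ := key s t hst
      rw [Real.dist_eq, Real.dist_eq, abs_sub_comm (h s) (h t),
        abs_of_nonneg (sub_nonneg.2 h1), abs_sub_comm s t, abs_of_nonneg (sub_nonneg.2 hst)]
      push_cast
      linarith
    · obtain ⟨h1, h2⟩ := key t s hts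
      rw [Real.dist_eq, Real.dist_eq, abs_of_nonneg (sub_nonneg.2 h1),
        abs_of_nonneg (sub_nonneg.2 hts)]
      push_cast
      linarith
  have h0' : h 0 = 0 := by
    have hemp : (A ∩ Iio 0) ∩ Icc (0:ℝ) 1 = ∅ := by
      apply Set.eq_empty_iff_forall_notMem.mpr
      rintro z ⟨⟨_, hz⟩, hz0, _⟩
      exact absurd hz (not_lt.2 hz0)
    have : μ2 (A ∩ Iio 0) = 0 := by
      rw [hμ2, Measure.add_apply, Measure.restrict_apply (hA.inter measurableSet_Iio), hemp]
      simp
    rw [hh]; simp only []; rw [this]; simp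
  have h2' : h 2 = (μ2 A).toReal := by
    have hs2 : (A ∩ Iio 2) ∩ Icc (0:ℝ) 1 = A ∩ Icc (0:ℝ) 1 := by
      ext z
      simp only [mem_inter_iff, mem_Iio, mem_Icc]
      constructor
      · rintro ⟨⟨hz, _⟩, hz2⟩; exact ⟨hz, hz2⟩
      · rintro ⟨hz, hz2⟩; exact ⟨⟨hz, by linarith [hz2.2]⟩, hz2⟩
    have : μ2 (A ∩ Iio 2) = μ2 A := by
      rw [hμ2, Measure.add_apply, Measure.add_apply,
        Measure.restrict_apply (hA.inter measurableSet_Iio), Measure.restrict_apply hA, hs2]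
    rw [hh]; simp only []; rw [this]
  have hAfin : μ2 A ≠ ⊤ := measure_ne_top _ _
  have hApos' : 0 < (μ2 A).toReal := ENNReal.toReal_pos hApos.ne' hAfin
  have hmid : (μ2 A).toReal / 2 ∈ Icc (h 0) (h 2) := by
    rw [h0', h2']
    constructor <;> linarith
  obtain ⟨t, _, hht⟩ := intermediate_value_Icc (by norm_num : (0:ℝ) ≤ 2)
    (hlip.continuous.continuousOn) hmid
  refine ⟨A ∩ Iio t, hA.inter measurableSet_Iio, inter_subset_left, ?_, ?_⟩
  · rw [pos_iff_ne_zero]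
    intro hz
    rw [hh] at hht
    simp only [] at hht
    rw [hz] at hht
    simp at hht
    linarith
  · have hlt : (μ2 (A ∩ Iio t)).toReal < (μ2 A).toReal := by
      have : h t = (μ2 (A ∩ Iio t)).toReal := rfl
      rw [← this, hht]
      linarith
    exact (ENNReal.toReal_lt_toReal (measure_ne_top _ _) hAfin).mp hlt

lemma exists_partition (x : ℝ) (hx : 0 < x) (hx' : x ≤ 1/16) :
    ∃ (D : Finset (Set ℝ)) (s : ℝ),
      IsPartition D (Icc (0:ℝ) 1) ∧
      (∀ I ∈ D, ∃ a b : ℝ, 0 ≤ a ∧ b ≤ 1 ∧ a ≤ b ∧ b - a ≤ 2*x ∧ I ⊆ Icc a b) ∧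
      x ≤ s ∧ s ≤ 2*x ∧
      (∑ I ∈ D, fLog (((volume.restrict (Icc (0:ℝ) 1)) I).toReal)) =
        (1 - s) * Real.sin (Real.log x) + fLog s := by
  have hx16 : (16:ℝ) ≤ 1/x := by rw [le_div_iff₀ hx]; linarith
  set n := ⌊1/x⌋₊ with hn
  have hn16 : 16 ≤ n := Nat.le_floor (by exact_mod_cast hx16)
  set m := n - 1 with hm
  have hnm : n = m + 1 := by omega
  have hm1 : 1 ≤ m := by omega
  have hnx : ((m:ℝ) + 1) * x ≤ 1 := by
    have h1 : (n:ℝ) ≤ 1/x := Nat.floor_le (by positivity)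
    have h2 : (n:ℝ) * x ≤ (1/x) * x := mul_le_mul_of_nonneg_right h1 hx.le
    rw [one_div, inv_mul_cancel₀ hx.ne'] at h2
    have : ((m:ℝ) + 1) = (n:ℝ) := by rw [hnm]; push_cast; ring
    rw [this]; exact h2
  have hlt : 1 < ((m:ℝ) + 2) * x := by
    have h1 : 1/x < (n:ℝ) + 1 := Nat.lt_floor_add_one (1/x)
    have h2 : (1/x) * x < ((n:ℝ) + 1) * x := mul_lt_mul_of_pos_right h1 hx
    rw [one_div, inv_mul_cancel₀ hx.ne'] at h2
    have : ((m:ℝ) + 2) = (n:ℝ) + 1 := by rw [hnm]; push_cast; ring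
    rw [this]; exact h2
  set s := 1 - (m:ℝ) * x with hs
  have hsx : x ≤ s := by rw [hs]; nlinarith
  have hs2x : s ≤ 2 * x := by rw [hs]; nlinarith
  -- endpoints
  set e : ℕ → ℝ := fun i => if i = m + 1 then 1 else (i:ℝ) * x with he
  have heval : ∀ i, i ≤ m → e i = (i:ℝ) * x := by
    intro i hi
    simp only [he, if_neg (by omega : i ≠ m + 1)]
  have he0 : e 0 = 0 := by rw [heval 0 (by omega)]; simp
  have helast : e (m+1) = 1 := by simp [he]
  have hele : ∀ i, i ≤ m + 1 → e i ≤ 1 := by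
    intro i hi
    rcases eq_or_lt_of_le hi with h | h
    · rw [h, helast]
    · rw [heval i (by omega)]
      have : (i:ℝ) ≤ (m:ℝ) := by exact_mod_cast (by omega : i ≤ m)
      nlinarith
  have hemono : ∀ i j, i ≤ j → j ≤ m + 1 → e i ≤ e j := by
    intro i j hij hj
    rcases eq_or_lt_of_le hj with h | h
    · rw [h, helast]; exact hele i (by omega)
    · rw [heval i (by omega), heval j (by omega)]
      have : (i:ℝ) ≤ (j:ℝ) := by exact_mod_cast hij
      nlinarith
  have hestrict : ∀ i, i ≤ m → e i < e (i+1) := by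
    intro i hi
    rcases eq_or_lt_of_le hi with h | h
    · rw [h, helast, heval m le_rfl]; nlinarith
    · rw [heval i (by omega), heval (i+1) (by omega)]
      push_cast; nlinarith
  have henneg : ∀ i, 0 ≤ e i := by
    intro i
    by_cases h : i = m + 1
    · rw [h, helast]; norm_num
    · rw [he]; simp only [if_neg h]; positivity
  -- pieces
  classical
  set piece : ℕ → Set ℝ := fun i => if i = 0 then Icc 0 (e 1) else Ioc (e i) (e (i+1))
    with hpiece
  have hpmeas : ∀ i, MeasurableSet (piece i) := by
    intro i
    simp only [hpiece]
    split_ifs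
    · exact measurableSet_Icc
    · exact measurableSet_Ioc
  have hpsub : ∀ i, i ≤ m → piece i ⊆ Icc (e i) (e (i+1)) := by
    intro i hi
    simp only [hpiece]
    split_ifs with h
    · rw [h, he0]
    · exact Ioc_subset_Icc_self
  have hpne : ∀ i, i ≤ m → (piece i).Nonempty := by
    intro i hi
    simp only [hpiece]
    split_ifs with h
    · exact ⟨0, le_refl 0, by rw [← he0]; exact hemono 0 1 (by omega) (by omega)⟩
    · exact nonempty_Ioc.mpr (hestrict i hi)
  have hpdisj : ∀ i j, i < j → j ≤ m → Disjoint (piece i) (piece j) := by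
    intro i j hij hj
    have h1 : piece i ⊆ Iic (e (i+1)) := by
      refine subset_trans (hpsub i (by omega)) ?_
      exact Icc_subset_Iic_self
    have h2 : piece j ⊆ Ioi (e j) := by
      rw [hpiece]
      simp only [if_neg (by omega : j ≠ 0)]
      exact Ioc_subset_Ioi_self
    have h3 : e (i+1) ≤ e j := hemono (i+1) j (by omega) (by omega)
    refine Disjoint.mono h1 h2 ?_
    rw [Set.disjoint_left]
    intro z hz hz2
    rw [mem_Iic] at hz
    rw [mem_Ioi] at hz2
    linarith
  -- lambda values
  have hval : ∀ i, i ≤ m → ((volume.restrict (Icc (0:ℝ) 1)) (piece i)).toReal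
      = e (i+1) - e i := by
    intro i hi
    have hsub1 : piece i ⊆ Icc (0:ℝ) 1 := by
      refine subset_trans (hpsub i hi) ?_
      intro z hz
      exact ⟨le_trans (henneg i) hz.1, le_trans hz.2 (hele (i+1) (by omega))⟩
    rw [Measure.restrict_apply (hpmeas i), Set.inter_eq_self_of_subset_left hsub1]
    simp only [hpiece]
    split_ifs with h
    · rw [h, he0, Real.volume_Icc, ENNReal.toReal_ofReal (by linarith [hemono 0 1 (by omega : (0:ℕ) ≤ 1) (by omega), he0])]
    · rw [Real.volume_Ioc, ENNReal.toReal_ofReal (by linarith [hestrict i hi])]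
  -- the finset
  set D := (Finset.range (m+1)).image piece with hD
  have hinj : ∀ i ∈ Finset.range (m+1), ∀ j ∈ Finset.range (m+1),
      piece i = piece j → i = j := by
    intro i hi j hj hij
    rw [Finset.mem_range] at hi hj
    by_contra hne
    rcases Nat.lt_or_ge i j with h | h
    · have := hpdisj i j h (by omega)
      rw [hij] at this
      exact (hpne j (by omega)).ne_empty (by simpa using disjoint_self.mp this)
    · have hji : j < i := by omega
      have := hpdisj j i hji (by omega)
      rw [hij] at this
      exact (hpne j (by omega)).ne_empty (by simpa using disjoint_self.mp this)
  -- union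
  have hunion : ∀ k, k ≤ m → (⋃ i ∈ Finset.range (k+1), piece i) = Icc 0 (e (k+1)) := by
    intro k hk
    induction k with
    | zero =>
      have h0 : (⋃ i ∈ Finset.range 1, piece i) = piece 0 := by simp
      rw [h0]
      simp only [hpiece, if_pos rfl]
    | succ k ih =>
      rw [Finset.range_add_one]
      rw [Finset.set_biUnion_insert]
      rw [ih (by omega)]
      have hp : piece (k+1) = Ioc (e (k+1)) (e (k+2)) := by
        simp only [hpiece, if_neg (Nat.succ_ne_zero k)]
      rw [hp, Set.union_comm, Icc_union_Ioc_eq_Icc (henneg (k+1)) (hemono (k+1) (k+2) (by omega) (by omega))]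
  refine ⟨D, s, ⟨?_, ?_, ?_⟩, ?_, hsx, hs2x, ?_⟩
  · intro I hI
    rw [hD, Finset.mem_image] at hI
    obtain ⟨i, _, rfl⟩ := hI
    exact hpmeas i
  · intro I hI J hJ hIJ
    rw [hD, Finset.coe_image] at hI hJ
    obtain ⟨i, hi, rfl⟩ := hI
    obtain ⟨j, hj, rfl⟩ := hJ
    rw [Finset.mem_coe, Finset.mem_range] at hi hj
    have hne : i ≠ j := fun h => hIJ (by rw [h])
    rcases Nat.lt_or_ge i j with h | h
    · exact (hpdisj i j h (by omega)).mono (le_refl _) (le_refl _)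
    · exact ((hpdisj j i (by omega) (by omega)).symm).mono (le_refl _) (le_refl _)
  · rw [hD, Finset.coe_image, Set.sUnion_image]
    have : (⋃ i ∈ (Finset.range (m+1) : Finset ℕ), piece i) = Icc 0 (e (m+1)) :=
      hunion m le_rfl
    rw [← helast]
    rw [← this]
    simp [Finset.mem_coe]
  · intro I hI
    rw [hD, Finset.mem_image] at hI
    obtain ⟨i, hi, rfl⟩ := hI
    rw [Finset.mem_range] at hi
    have him : i ≤ m := by omega
    refine ⟨e i, e (i+1), henneg i, hele (i+1) (by omega), hemono i (i+1) (by omega) (by omega),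
      ?_, hpsub i him⟩
    rcases eq_or_lt_of_le him with h | h
    · rw [h, helast, heval m le_rfl]
      have : 1 - (m:ℝ) * x = s := by rw [hs]
      linarith
    · rw [heval i (by omega), heval (i+1) (by omega)]
      push_cast
      nlinarith
  · rw [hD, Finset.sum_image hinj]
    rw [Finset.sum_range_succ]
    have hlast : ((volume.restrict (Icc (0:ℝ) 1)) (piece m)).toReal = s := by
      rw [hval m le_rfl, helast, heval m le_rfl, hs]
    have hrest : ∀ i ∈ Finset.range m,
        fLog (((volume.restrict (Icc (0:ℝ) 1)) (piece i)).toReal) = x * Real.sin (Real.log x) := by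
      intro i hi
      rw [Finset.mem_range] at hi
      have : ((volume.restrict (Icc (0:ℝ) 1)) (piece i)).toReal = x := by
        rw [hval i (by omega), heval i (by omega), heval (i+1) (by omega)]
        push_cast; ring
      rw [this, fLog]
    rw [Finset.sum_congr rfl hrest, Finset.sum_const, Finset.card_range, hlast,
      nsmul_eq_mul]
    have hmx : (m:ℝ) * x = 1 - s := by rw [hs]; ring
    rw [fLog]
    calc (m:ℝ) * (x * Real.sin (Real.log x)) + s * Real.sin (Real.log s)
        = ((m:ℝ) * x) * Real.sin (Real.log x) + s * Real.sin (Real.log s) := by ring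
      _ = (1 - s) * Real.sin (Real.log x) + s * Real.sin (Real.log s) := by rw [hmx]

/-- The game `ν = fLog ∘ λ` (λ Lebesgue on `[0,1]`) is a Lipschitz game, but is
not Burkill–Cesari integrable w.r.t. any mesh `δ_μ`, `μ ∈ NA⁺`. -/
theorem stmt18 :
    (∃ μ : Measure ℝ, IsFiniteMeasure μ ∧ Nonatomic μ ∧
      (∀ S T : Set ℝ, MeasurableSet S → MeasurableSet T → S ⊆ T →
        |fLog (((volume.restrict (Set.Icc (0 : ℝ) 1)) T).toReal) -
          fLog (((volume.restrict (Set.Icc (0 : ℝ) 1)) S).toReal)| ≤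
          (μ T).toReal - (μ S).toReal)) ∧
    (∀ μ : Measure ℝ, IsFiniteMeasure μ → Nonatomic μ →
      ¬ ∃ L : Set ℝ → ℝ, ∀ F : Set ℝ, MeasurableSet F → ∀ ε > 0, ∃ δ > 0,
        ∀ D : Finset (Set ℝ), IsPartition D F → (∀ I ∈ D, (μ I).toReal < δ) →
          |(∑ I ∈ D, fLog (((volume.restrict (Set.Icc (0 : ℝ) 1)) I).toReal)) -
            L F| < ε) := by
  constructor
  · refine ⟨volume.restrict (Icc (0:ℝ) 1) + volume.restrict (Icc (0:ℝ) 1),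
      vol2_finite, nonatomic_two_vol, ?_⟩
    intro S T hS hT hST
    haveI : IsFiniteMeasure (volume.restrict (Icc (0:ℝ) 1)) := by
      constructor
      rw [Measure.restrict_apply_univ, Real.volume_Icc]
      simp
    have hST' : volume.restrict (Icc (0:ℝ) 1) S ≤ volume.restrict (Icc (0:ℝ) 1) T :=
      measure_mono hST
    have ha : 0 ≤ ((volume.restrict (Icc (0:ℝ) 1)) S).toReal := ENNReal.toReal_nonneg
    have hab : ((volume.restrict (Icc (0:ℝ) 1)) S).toReal
        ≤ ((volume.restrict (Icc (0:ℝ) 1)) T).toReal :=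
      ENNReal.toReal_mono (measure_ne_top _ _) hST'
    have hkey := fLog_lip ha hab
    have hT2 : ((volume.restrict (Icc (0:ℝ) 1) + volume.restrict (Icc (0:ℝ) 1)) T).toReal
        = 2 * ((volume.restrict (Icc (0:ℝ) 1)) T).toReal := by
      rw [Measure.add_apply, ENNReal.toReal_add (measure_ne_top _ _) (measure_ne_top _ _)]
      ring
    have hS2 : ((volume.restrict (Icc (0:ℝ) 1) + volume.restrict (Icc (0:ℝ) 1)) S).toReal
        = 2 * ((volume.restrict (Icc (0:ℝ) 1)) S).toReal := by
      rw [Measure.add_apply, ENNReal.toReal_add (measure_ne_top _ _) (measure_ne_top _ _)]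
      ring
    rw [hT2, hS2]
    linarith
  · rintro μ hfin hna ⟨L, hL⟩
    haveI := hfin
    obtain ⟨δ, hδpos, hδ⟩ := hL (Icc 0 1) measurableSet_Icc (1/2) (by norm_num)
    obtain ⟨η, hηpos, hsmall⟩ := small_intervals μ (nonatomic_no_atoms hna) hδpos
    have hcpos : 0 < min (1/16 : ℝ) (η/2) := lt_min (by norm_num) (by positivity)
    obtain ⟨x, hx0, hxc, hxsin⟩ := exists_log_sin (Real.pi/2) _ hcpos
    obtain ⟨y, hy0, hyc, hysin⟩ := exists_log_sin (-(Real.pi/2)) _ hcpos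
    rw [Real.sin_pi_div_two] at hxsin
    rw [Real.sin_neg, Real.sin_pi_div_two] at hysin
    have hx16 : x ≤ 1/16 := le_trans hxc (min_le_left _ _)
    have hxη : x ≤ η/2 := le_trans hxc (min_le_right _ _)
    have hy16 : y ≤ 1/16 := le_trans hyc (min_le_left _ _)
    have hyη : y ≤ η/2 := le_trans hyc (min_le_right _ _)
    obtain ⟨D1, s1, hP1, hmesh1, hs1x, hs1x2, hsum1⟩ := exists_partition x hx0 hx16
    obtain ⟨D2, s2, hP2, hmesh2, hs2x, hs2x2, hsum2⟩ := exists_partition y hy0 hy16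
    have hm1 : ∀ I ∈ D1, (μ I).toReal < δ := by
      intro I hI
      obtain ⟨a, b, hha, hhb, hab, hba, hsub⟩ := hmesh1 I hI
      have h1 : (μ I).toReal ≤ (μ (Icc a b)).toReal :=
        ENNReal.toReal_mono (measure_ne_top _ _) (measure_mono hsub)
      have h2 : (μ (Icc a b)).toReal < δ :=
        hsmall a b (by linarith) (by linarith) hab (by linarith)
      linarith
    have hm2 : ∀ I ∈ D2, (μ I).toReal < δ := by
      intro I hI
      obtain ⟨a, b, hha, hhb, hab, hba, hsub⟩ := hmesh2 I hI
      have h1 : (μ I).toReal ≤ (μ (Icc a b)).toReal :=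
        ENNReal.toReal_mono (measure_ne_top _ _) (measure_mono hsub)
      have h2 : (μ (Icc a b)).toReal < δ :=
        hsmall a b (by linarith) (by linarith) hab (by linarith)
      linarith
    have hB1 := hδ D1 hP1 hm1
    have hB2 := hδ D2 hP2 hm2
    rw [hsum1, hxsin] at hB1
    rw [hsum2, hysin] at hB2
    have hf1 := abs_le.mp (fLog_abs_le (by linarith : (0:ℝ) ≤ s1))
    have hf2 := abs_le.mp (fLog_abs_le (by linarith : (0:ℝ) ≤ s2))
    rw [abs_lt] at hB1 hB2
    obtain ⟨hB1l, hB1r⟩ := hB1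
    obtain ⟨hB2l, hB2r⟩ := hB2
    nlinarith [hf1.1, hf1.2, hf2.1, hf2.2]
end
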